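/- arXiv:1512.03168 — 3 statements merged into one kernel-verified Lean document; each statement's English description precedes it below -/
import Mathlib

section
/- Let G be a finite group and ρ: G → GL(V) an irreducible complex representation whose character takes all of its values in ℚ. Then there exist a representation τ: G → GL(W) of G over ℚ and a positive integer s such that W ⊗_ℚ ℂ ≅ V^{⊕s} as complex representations of G. -/
open scoped TensorProduct

namespace Paper

variable {k : Type*} [Field k] {G : Type*} [Group G]

section Defs

variable {V W : Type*} [AddCommGroup V] [Module k V] [AddCommGroup W] [Module k W]

/-- `U ⊆ V` is a subrepresentation of `ρ`. -/
def IsSubrep (ρ : Representation k G V) (U : Submodule k V) : Prop :=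
  ∀ g : G, ∀ v ∈ U, ρ g v ∈ U

/-- A representation is irreducible if it is nonzero and its only subrepresentations
are `⊥` and `⊤`. -/
def IsIrred (ρ : Representation k G V) : Prop :=
  (∃ v : V, v ≠ 0) ∧ ∀ U : Submodule k V, IsSubrep ρ U → U = ⊥ ∨ U = ⊤

/-- Isomorphism of representations. -/
def RepIso (ρ : Representation k G V) (π : Representation k G W) : Prop :=
  ∃ e : V ≃ₗ[k] W, ∀ (g : G) (v : V), e (ρ g v) = π g (e v)

/-- `ρ` occurs (with positive multiplicity) in `π`: there is a nonzero equivariant map. -/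
def Occurs (ρ : Representation k G V) (π : Representation k G W) : Prop :=
  ∃ f : V →ₗ[k] W, f ≠ 0 ∧ ∀ (g : G) (v : V), f (ρ g v) = π g (f v)

/-- The character of a representation. -/
noncomputable def char (ρ : Representation k G V) : G → k :=
  fun g => LinearMap.trace k V (ρ g)

/-- The space of equivariant linear maps between two representations. -/
def repHom (ρ : Representation k G V) (π : Representation k G W) :
    Submodule k (V →ₗ[k] W) where
  carrier := {f | ∀ (g : G) (v : V), f (ρ g v) = π g (f v)}
  add_mem' := by
    intro f₁ f₂ h₁ h₂ g v
    simp [h₁ g v, h₂ g v]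
  zero_mem' := by intro g v; simp
  smul_mem' := by intro c f hf g v; simp [hf g v]

/-- The multiplicity of an irreducible complex representation `ρ` in `π`,
as the dimension of the space of equivariant maps. -/
noncomputable def mult (ρ : Representation k G V) (π : Representation k G W) : ℕ :=
  Module.finrank k (repHom ρ π)

/-- The direct sum of a family of representations. -/
def piRep {ι : Type*} {Vi : ι → Type*} [∀ i, AddCommGroup (Vi i)] [∀ i, Module k (Vi i)]
    (ρ : ∀ i, Representation k G (Vi i)) : Representation k G (∀ i, Vi i) where
  toFun g := LinearMap.pi fun i => (ρ i g).comp (LinearMap.proj i)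
  map_one' := by
    refine LinearMap.ext fun v => funext fun i => ?_
    simp
  map_mul' g h := by
    refine LinearMap.ext fun v => funext fun i => ?_
    simp

/-- The direct sum of two representations. -/
def prodRep (ρ : Representation k G V) (π : Representation k G W) :
    Representation k G (V × W) where
  toFun g := (ρ g).prodMap (π g)
  map_one' := by
    refine LinearMap.ext fun v => ?_
    simp
  map_mul' g h := by
    refine LinearMap.ext fun v => ?_
    simp

/-- The restriction of a representation to a subrepresentation. -/
def subRep (ρ : Representation k G V) (U : Submodule k V) (hU : IsSubrep ρ U) :
    Representation k G U where
  toFun g := (ρ g).restrict (hU g)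
  map_one' := by
    refine LinearMap.ext fun v => Subtype.ext ?_
    simp [LinearMap.restrict_apply]
  map_mul' g h := by
    refine LinearMap.ext fun v => Subtype.ext ?_
    simp [LinearMap.restrict_apply]

end Defs

section Complexify

variable {W : Type*} [AddCommGroup W] [Module ℚ W]

/-- The complexification of a rational representation. -/
noncomputable def complexify (τ : Representation ℚ G W) :
    Representation ℂ G (ℂ ⊗[ℚ] W) where
  toFun g := LinearMap.baseChange ℂ (τ g)
  map_one' := by
    simp only [map_one, LinearMap.baseChange_one]
  map_mul' g h := by
    simp only [map_mul, LinearMap.baseChange_mul]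

end Complexify

section Mat

variable {n : ℕ}

/-- The representation on `Fin n → ℂ` attached to a matrix representation. -/
noncomputable def matRep (ρ : G →* Matrix.GeneralLinearGroup (Fin n) ℂ) :
    Representation ℂ G (Fin n → ℂ) where
  toFun g := Matrix.toLin' (ρ g)
  map_one' := by simp [Module.End.one_eq_id]
  map_mul' g h := by
    simp [Matrix.toLin'_mul, Module.End.mul_eq_comp]

/-- The matrix representation obtained by applying a field embedding `σ` to all
matrix coefficients. -/
def twist (σ : ℂ →+* ℂ) (ρ : G →* Matrix.GeneralLinearGroup (Fin n) ℂ) :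
    G →* Matrix.GeneralLinearGroup (Fin n) ℂ :=
  (Units.map (σ.mapMatrix).toMonoidHom).comp ρ

end Mat

/-- Bundled finite-dimensional complex representations of `G`. -/
structure CxRep (G : Type*) [Group G] where
  carrier : Type
  [isAddCommGroup : AddCommGroup carrier]
  [isModule : Module ℂ carrier]
  [isFD : FiniteDimensional ℂ carrier]
  rep : Representation ℂ G carrier

attribute [instance] CxRep.isAddCommGroup CxRep.isModule CxRep.isFD

/-- Bundled finite-dimensional rational representations of `G`. -/
structure QRep (G : Type*) [Group G] where
  carrier : Type
  [isAddCommGroup : AddCommGroup carrier]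
  [isModule : Module ℚ carrier]
  [isFD : FiniteDimensional ℚ carrier]
  rep : Representation ℚ G carrier

attribute [instance] QRep.isAddCommGroup QRep.isModule QRep.isFD

section Fix

variable {V W : Type*} [AddCommGroup V] [Module k V] [AddCommGroup W] [Module k W]

/-- The subspace of vectors fixed by a subgroup `H`. -/
def fixSub (ρ : Representation k G V) (H : Subgroup G) : Submodule k V where
  carrier := {v | ∀ h ∈ H, ρ h v = v}
  add_mem' := by
    intro a b ha hb h hh
    simp [ha h hh, hb h hh]
  zero_mem' := by intro h hh; simp
  smul_mem' := by intro c v hv h hh; simp [hv h hh]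

/-- For a normal subgroup `H`, the fixed subspace `V^H` is a `G`-subrepresentation. -/
theorem fixSub_isSubrep (ρ : Representation k G V) (H : Subgroup G) [hN : H.Normal] :
    IsSubrep ρ (fixSub ρ H) := by
  intro g v hv h hh
  have h1 : g⁻¹ * h * g ∈ H := by
    simpa using hN.conj_mem h hh g⁻¹
  have h2 : ρ h (ρ g v) = ρ g (ρ (g⁻¹ * h * g) v) := by
    rw [← Module.End.mul_apply, ← map_mul, ← Module.End.mul_apply, ← map_mul]
    group
  rw [h2, hv _ h1]

/-- The representation of `G` on the fixed subspace of a normal subgroup. -/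
def fixRep (ρ : Representation k G V) (H : Subgroup G) [H.Normal] :
    Representation k G (fixSub ρ H) :=
  subRep ρ (fixSub ρ H) (fixSub_isSubrep ρ H)

end Fix




section Aux
variable {G : Type*} [Group G]

/-- The left regular representation. -/
def regRep (k : Type*) [Field k] (G : Type*) [Group G] : Representation k G (G → k) where
  toFun g := LinearMap.funLeft k k (fun x => g⁻¹ * x)
  map_one' := by ext a x; simp [LinearMap.funLeft]
  map_mul' g h := by ext a x; simp [LinearMap.funLeft, mul_assoc]

lemma regRep_apply {k : Type*} [Field k] (g : G) (a : G → k) (x : G) :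
    regRep k G g a x = a (g⁻¹ * x) := rfl

variable [Fintype G]

/-- Right convolution by `b`. -/
def convR (k : Type*) [Field k] (b : G → k) : (G → k) →ₗ[k] (G → k) where
  toFun a := fun h => ∑ g : G, a g * b (g⁻¹ * h)
  map_add' a a' := by ext h; simp [add_mul, Finset.sum_add_distrib]
  map_smul' c a := by ext h; simp [Finset.mul_sum, mul_assoc]

lemma convR_apply {k : Type*} [Field k] (b a : G → k) (h : G) :
    convR k b a h = ∑ g : G, a g * b (g⁻¹ * h) := rfl

lemma convR_reg {k : Type*} [Field k] (b : G → k) (g : G) (a : G → k) :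
    convR k b (regRep k G g a) = regRep k G g (convR k b a) := by
  ext h
  show ∑ x : G, a (g⁻¹ * x) * b (x⁻¹ * h) = ∑ y : G, a y * b (y⁻¹ * (g⁻¹ * h))
  refine Fintype.sum_equiv (Equiv.mulLeft g⁻¹) _ _ fun x => ?_
  simp [mul_assoc]

variable {V : Type*} [AddCommGroup V] [Module ℂ V]

/-- The linear extension of `ρ` to the group algebra. -/
noncomputable def Phi (ρ : Representation ℂ G V) : (G → ℂ) →ₗ[ℂ] (V →ₗ[ℂ] V) where
  toFun a := ∑ g : G, a g • (ρ g : V →ₗ[ℂ] V)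
  map_add' a a' := by simp [add_smul, Finset.sum_add_distrib]
  map_smul' c a := by simp [smul_smul, Finset.smul_sum]

lemma Phi_apply (ρ : Representation ℂ G V) (a : G → ℂ) :
    Phi ρ a = ∑ g : G, a g • (ρ g : V →ₗ[ℂ] V) := rfl

lemma Phi_reg (ρ : Representation ℂ G V) (g : G) (a : G → ℂ) :
    Phi ρ (regRep ℂ G g a) = ρ g * Phi ρ a := by
  rw [Phi_apply, Phi_apply, Finset.mul_sum]
  refine Fintype.sum_equiv (Equiv.mulLeft g⁻¹) _ _ fun x => ?_
  simp only [regRep_apply, Equiv.coe_mulLeft, mul_smul_comm, ← map_mul, mul_inv_cancel_left]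

lemma Phi_conv (ρ : Representation ℂ G V) (b a : G → ℂ) :
    Phi ρ (convR ℂ b a) = Phi ρ a * Phi ρ b := by
  rw [Phi_apply, Phi_apply, Phi_apply, Finset.sum_mul_sum]
  simp only [convR_apply, Finset.sum_smul]
  rw [Finset.sum_comm]
  refine Finset.sum_congr rfl fun g _ => ?_
  refine Fintype.sum_equiv (Equiv.mulLeft g⁻¹) _ _ fun x => ?_
  simp only [Equiv.coe_mulLeft, smul_mul_smul_comm, ← map_mul, mul_inv_cancel_left]

/-- Schur's lemma. -/
lemma schur [FiniteDimensional ℂ V] {ρ : Representation ℂ G V} (hρ : IsIrred ρ)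
    (T : V →ₗ[ℂ] V) (hT : ∀ g : G, ρ g * T = T * ρ g) :
    ∃ c : ℂ, T = c • (1 : V →ₗ[ℂ] V) := by
  obtain ⟨v0, hv0⟩ := hρ.1
  have : Nontrivial V := nontrivial_of_ne v0 0 hv0
  obtain ⟨c, hc⟩ := Module.End.exists_eigenvalue (T : Module.End ℂ V)
  obtain ⟨v, hv⟩ := hc.exists_hasEigenvector
  refine ⟨c, ?_⟩
  set U : Submodule ℂ V := LinearMap.ker (T - c • (1 : V →ₗ[ℂ] V)) with hU
  have hsub : IsSubrep ρ U := by
    intro g w hw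
    have hw' : T w = c • w := by
      have := hw
      simp only [hU, LinearMap.mem_ker, LinearMap.sub_apply, LinearMap.smul_apply,
        Module.End.one_apply, sub_eq_zero] at this
      exact this
    simp only [hU, LinearMap.mem_ker, LinearMap.sub_apply, LinearMap.smul_apply,
      Module.End.one_apply, sub_eq_zero]
    calc T (ρ g w) = (T * ρ g) w := rfl
      _ = (ρ g * T) w := by rw [hT g]
      _ = ρ g (T w) := rfl
      _ = c • ρ g w := by rw [hw', map_smul]
  have hUne : U ≠ ⊥ := by
    refine Submodule.ne_bot_iff _ |>.2 ⟨v, ?_, hv.2⟩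
    have : T v = c • v := hv.apply_eq_smul
    simp [hU, LinearMap.mem_ker, sub_eq_zero, this]
  have hUtop : U = ⊤ := (hρ.2 U hsub).resolve_left hUne
  ext w
  have : w ∈ U := hUtop ▸ Submodule.mem_top
  simpa [hU, LinearMap.mem_ker, sub_eq_zero] using this

end Aux

section Key
open Module
variable {G : Type*} [Group G] [Fintype G]
variable {V : Type*} [AddCommGroup V] [Module ℂ V]

lemma key [FiniteDimensional ℂ V] {ρ : Representation ℂ G V} (hρ : IsIrred ρ)
    (T : V →ₗ[ℂ] V) :
    ∑ g : G, (LinearMap.trace ℂ V (ρ g⁻¹ * T)) • (ρ g : V →ₗ[ℂ] V)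
      = ((Fintype.card G : ℂ) / (finrank ℂ V : ℂ)) • T := by
  obtain ⟨v0, hv0⟩ := hρ.1
  have : Nontrivial V := nontrivial_of_ne v0 0 hv0
  have hnpos : 0 < finrank ℂ V := finrank_pos
  have hn0 : ((finrank ℂ V : ℂ)) ≠ 0 := Nat.cast_ne_zero.2 hnpos.ne'
  set n := finrank ℂ V with hn
  have hN0 : ((Fintype.card G : ℂ)) ≠ 0 := Nat.cast_ne_zero.2 Fintype.card_ne_zero
  let b : Basis (Fin n) ℂ V := finBasis ℂ V
  set M : G → Matrix (Fin n) (Fin n) ℂ := fun g => LinearMap.toMatrix b b (ρ g) with hMdef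
  have hM : ∀ g h : G, M g * M h = M (g * h) := fun g h => by
    simp only [hMdef]
    rw [← LinearMap.toMatrix_mul, ← map_mul]
  have hMinv : ∀ g : G, M g⁻¹ * M g = 1 := fun g => by
    rw [hM, inv_mul_cancel]
    simp only [hMdef, map_one, LinearMap.toMatrix_one]
  -- Step 2: averaged conjugation is a scalar
  have step2 : ∀ E : Matrix (Fin n) (Fin n) ℂ,
      ∑ g : G, M g * E * M g⁻¹
        = ((Fintype.card G : ℂ) / n * E.trace) • (1 : Matrix (Fin n) (Fin n) ℂ) := by
    intro E
    set S := ∑ g : G, M g * E * M g⁻¹ with hS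
    have hcomm : ∀ h : G, ρ h * Matrix.toLin b b S = Matrix.toLin b b S * ρ h := by
      intro h
      apply (LinearMap.toMatrix b b).injective
      rw [LinearMap.toMatrix_mul, LinearMap.toMatrix_mul, LinearMap.toMatrix_toLin]
      show M h * S = S * M h
      rw [hS, Finset.mul_sum, Finset.sum_mul]
      refine Fintype.sum_equiv (Equiv.mulLeft h) _ _ fun x => ?_
      have h1 : M h * (M x * E * M x⁻¹) = M (h * x) * E * M x⁻¹ := by
        rw [← mul_assoc, ← mul_assoc, hM]
      have h2 : M (h * x) * E * M (h * x)⁻¹ * M h = M (h * x) * E * M x⁻¹ := by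
        rw [mul_assoc (M (h*x) * E), hM]
        congr 2
        group
      simp only [Equiv.coe_mulLeft, h1, h2]
    obtain ⟨c, hc⟩ := schur hρ (Matrix.toLin b b S) hcomm
    have hSc : S = c • (1 : Matrix (Fin n) (Fin n) ℂ) := by
      have := congrArg (LinearMap.toMatrix b b) hc
      rwa [LinearMap.toMatrix_toLin, map_smul, LinearMap.toMatrix_one] at this
    have htr : S.trace = (Fintype.card G : ℂ) * E.trace := by
      rw [hS, Matrix.trace_sum]
      rw [Finset.sum_congr rfl fun g _ => ?_]
      · rw [Finset.sum_const, Finset.card_univ, nsmul_eq_mul]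
      · rw [Matrix.trace_mul_cycle, hMinv, Matrix.one_mul]
    have hcn : c * n = (Fintype.card G : ℂ) * E.trace := by
      rw [← htr, hSc, Matrix.trace_smul, Matrix.trace_one]
      simp [mul_comm]
    rw [hSc]
    congr 1
    field_simp
    rw [mul_comm c, ← hcn]
    ring
  -- matrix coefficient orthogonality
  have entries : ∀ a b' k l : Fin n,
      ∑ g : G, M g k a * M g⁻¹ b' l
        = (Fintype.card G : ℂ) / n * (if a = b' then 1 else 0) * (if k = l then 1 else 0) := by
    intro a b' k l
    have h1 := congrArg (fun S => S k l) (step2 (Matrix.single a b' 1))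
    simp only [Matrix.sum_apply, Matrix.smul_apply, Matrix.one_apply, smul_eq_mul] at h1
    have hentry : ∀ g : G,
        (M g * Matrix.single a b' (1:ℂ) * M g⁻¹) k l = M g k a * M g⁻¹ b' l := by
      intro g
      simp [Matrix.mul_apply, Matrix.single, ite_and, mul_ite, ite_mul, mul_zero,
        zero_mul, mul_one, Finset.sum_ite_eq, Finset.sum_ite_eq']
    have htrE : (Matrix.single a b' (1:ℂ)).trace = if a = b' then 1 else 0 := by
      by_cases hab : a = b'
      · subst hab; simp [Matrix.trace_single_eq_same]
      · simp [hab, Matrix.trace_single_eq_of_ne (h := hab)]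
    rw [Finset.sum_congr rfl fun g _ => hentry g] at h1
    rw [htrE] at h1
    rw [h1]
    try by_cases hkl : k = l <;> simp [hkl] <;> try ring
    try ring
  -- conclude
  apply (LinearMap.toMatrix b b).injective
  rw [map_sum, map_smul]
  have hT : ∀ g : G, LinearMap.trace ℂ V (ρ g⁻¹ * T)
      = ∑ i : Fin n, ∑ j : Fin n, M g⁻¹ i j * LinearMap.toMatrix b b T j i := by
    intro g
    rw [LinearMap.trace_eq_matrix_trace ℂ b, LinearMap.toMatrix_mul]
    try simp only [Matrix.trace, Matrix.diag, Matrix.mul_apply]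
    try rfl
  ext k l
  rw [Matrix.sum_apply]
  have hterm : ∀ g : G, (LinearMap.toMatrix b b ((LinearMap.trace ℂ V (ρ g⁻¹ * T)) • ρ g)) k l
      = ∑ i : Fin n, ∑ j : Fin n,
          LinearMap.toMatrix b b T j i * (M g k l * M g⁻¹ i j) := by
    intro g
    rw [map_smul, Matrix.smul_apply, hT g, smul_eq_mul, Finset.sum_mul]
    refine Finset.sum_congr rfl fun i _ => ?_
    rw [Finset.sum_mul]
    refine Finset.sum_congr rfl fun j _ => ?_
    show M g⁻¹ i j * LinearMap.toMatrix b b T j i * M g k l = _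
    ring
  rw [Finset.sum_congr rfl fun g _ => hterm g]
  rw [Finset.sum_comm]
  rw [Finset.sum_congr rfl fun i _ => Finset.sum_comm]
  have hinner : ∀ i j : Fin n,
      ∑ g : G, LinearMap.toMatrix b b T j i * (M g k l * M g⁻¹ i j)
        = LinearMap.toMatrix b b T j i *
            (((Fintype.card G : ℂ) / n * (if l = i then 1 else 0)) * (if k = j then 1 else 0)) := by
    intro i j
    rw [← Finset.mul_sum, entries l i k j]
  rw [Finset.sum_congr rfl fun i _ => Finset.sum_congr rfl fun j _ => hinner i j]
  simp only [Matrix.smul_apply, smul_eq_mul, mul_ite, mul_one, mul_zero, ite_mul, zero_mul,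
    Finset.sum_ite_eq, Finset.sum_ite_eq', Finset.mem_univ, if_true]
  try ring
end Key

section Main
open Module

variable {G : Type*} [Group G] [Fintype G]
variable {V : Type*} [AddCommGroup V] [Module ℂ V]

/-- The representation on `End V` by postcomposition. -/
noncomputable def endRep (ρ : Representation ℂ G V) : Representation ℂ G (V →ₗ[ℂ] V) where
  toFun g := LinearMap.llcomp ℂ V V V (ρ g)
  map_one' := by ext f v; simp
  map_mul' g h := by ext f v; simp

omit [Fintype G] in
lemma endRep_apply (ρ : Representation ℂ G V) (g : G) (f : V →ₗ[ℂ] V) :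
    endRep ρ g f = ρ g ∘ₗ f := rfl

omit [Fintype G] in
lemma RepIso_trans {k : Type*} [Field k] {A B C : Type*} [AddCommGroup A] [Module k A]
    [AddCommGroup B] [Module k B] [AddCommGroup C] [Module k C]
    {ρ₁ : Representation k G A} {ρ₂ : Representation k G B} {ρ₃ : Representation k G C}
    (h₁ : RepIso ρ₁ ρ₂) (h₂ : RepIso ρ₂ ρ₃) : RepIso ρ₁ ρ₃ := by
  obtain ⟨e₁, he₁⟩ := h₁; obtain ⟨e₂, he₂⟩ := h₂
  exact ⟨e₁.trans e₂, fun g v => by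
    simp only [LinearEquiv.trans_apply, he₁, he₂]⟩

/-- Transport of a rational representation along a linear equivalence. -/
def transportRep {M N : Type*} [AddCommGroup M] [Module ℚ M] [AddCommGroup N] [Module ℚ N]
    (σ : Representation ℚ G M) (e : M ≃ₗ[ℚ] N) : Representation ℚ G N where
  toFun g := e.toLinearMap ∘ₗ σ g ∘ₗ e.symm.toLinearMap
  map_one' := by ext v; simp
  map_mul' g h := by ext v; simp

omit [Fintype G] in
lemma complexify_apply {M : Type*} [AddCommGroup M] [Module ℚ M]
    (σ : Representation ℚ G M) (g : G) (x : ℂ ⊗[ℚ] M) :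
    complexify σ g x = LinearMap.baseChange ℂ (σ g) x := rfl

omit [Fintype G] in
lemma repIso_complexify_transport {M N : Type*} [AddCommGroup M] [Module ℚ M]
    [AddCommGroup N] [Module ℚ N] (σ : Representation ℚ G M) (e : M ≃ₗ[ℚ] N) :
    RepIso (complexify (transportRep σ e)) (complexify σ) := by
  refine ⟨(LinearEquiv.baseChange ℚ ℂ _ _ e).symm, fun g x => ?_⟩
  induction x using TensorProduct.induction_on with
  | zero => simp
  | tmul c m =>
      have h1 : (LinearEquiv.baseChange ℚ ℂ M N e).symm = LinearEquiv.baseChange ℚ ℂ N M e.symm := by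
        rfl
      rw [complexify_apply, complexify_apply, h1]
      show (LinearEquiv.baseChange ℚ ℂ N M e.symm)
            (LinearMap.baseChange ℂ (transportRep σ e g) (c ⊗ₜ m))
          = LinearMap.baseChange ℂ (σ g) ((LinearEquiv.baseChange ℚ ℂ N M e.symm) (c ⊗ₜ m))
      rw [LinearMap.baseChange_tmul]
      show LinearMap.baseChange ℂ e.symm.toLinearMap (c ⊗ₜ (transportRep σ e g m))
          = LinearMap.baseChange ℂ (σ g) (LinearMap.baseChange ℂ e.symm.toLinearMap (c ⊗ₜ m))
      rw [LinearMap.baseChange_tmul, LinearMap.baseChange_tmul, LinearMap.baseChange_tmul]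
      congr 1
      show e.symm ((e.toLinearMap ∘ₗ σ g ∘ₗ e.symm.toLinearMap) m) = σ g (e.symm m)
      simp
  | add x y hx hy =>
      simp only [map_add, hx, hy]
end Main

/-- an irreducible complex representation with rational character values is,
up to a multiplicity `s`, the complexification of a rational representation. -/
theorem statement_4 {G : Type*} [Group G] [Fintype G]
    {V : Type*} [AddCommGroup V] [Module ℂ V] [FiniteDimensional ℂ V]
    (ρ : Representation ℂ G V) (hρ : IsIrred ρ)
    (hrat : ∀ g : G, ∃ q : ℚ, char ρ g = (q : ℂ)) :
    ∃ (R : QRep G) (s : ℕ), 0 < s ∧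
      RepIso (complexify R.rep) (piRep fun _ : Fin s => ρ) := by
  classical
  obtain ⟨v0, hv0⟩ := hρ.1
  have hNT : Nontrivial V := nontrivial_of_ne v0 0 hv0
  have hnpos : 0 < Module.finrank ℂ V := Module.finrank_pos
  set n := Module.finrank ℂ V with hn
  have hn0 : (n : ℂ) ≠ 0 := Nat.cast_ne_zero.2 hnpos.ne'
  have hN0 : ((Fintype.card G : ℂ)) ≠ 0 := Nat.cast_ne_zero.2 Fintype.card_ne_zero
  -- the rational/complex idempotent vectors
  set eC : G → ℂ := fun x => (n : ℂ) / (Fintype.card G : ℂ) * LinearMap.trace ℂ V (ρ x⁻¹)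
    with heC
  set eQ : G → ℚ := fun x => (n : ℚ) / (Fintype.card G : ℚ) * Classical.choose (hrat x⁻¹)
    with heQ
  have heCrat : ∀ x : G, ((eQ x : ℚ) : ℂ) = eC x := by
    intro x
    have hs := Classical.choose_spec (hrat x⁻¹)
    rw [heQ, heC]
    push_cast
    rw [← hs]
    rfl
  -- consequences of the key orthogonality lemma
  have hPhi_eC : Phi ρ eC = 1 := by
    rw [Phi_apply]
    have h1 : ∀ g : G, eC g • (ρ g : V →ₗ[ℂ] V)
        = ((n : ℂ)/(Fintype.card G : ℂ))
            • (LinearMap.trace ℂ V (ρ g⁻¹ * 1) • (ρ g : V →ₗ[ℂ] V)) := by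
      intro g; rw [heC, smul_smul, mul_one]
    rw [Finset.sum_congr rfl fun g _ => h1 g, ← Finset.smul_sum, key hρ 1, smul_smul]
    rw [div_mul_div_comm, mul_comm, div_self (by exact mul_ne_zero hN0 hn0), one_smul]
  have hconvId : ∀ (c : G → ℂ) (h : G),
      convR ℂ eC c h
        = (n : ℂ)/(Fintype.card G : ℂ) * LinearMap.trace ℂ V (ρ h⁻¹ * Phi ρ c) := by
    intro c h
    rw [convR_apply]
    have h2 : ∀ g : G, c g * eC (g⁻¹ * h)
        = (n : ℂ)/(Fintype.card G : ℂ) * (c g * LinearMap.trace ℂ V (ρ h⁻¹ * ρ g)) := by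
      intro g
      simp only [heC]
      have h3 : (ρ ((g⁻¹ * h)⁻¹) : V →ₗ[ℂ] V) = ρ h⁻¹ * ρ g := by
        rw [← map_mul]; congr 1; group
      rw [h3]; ring
    rw [Finset.sum_congr rfl fun g _ => h2 g, ← Finset.mul_sum]
    congr 1
    rw [Phi_apply, Finset.mul_sum, map_sum]
    refine Finset.sum_congr rfl fun g _ => ?_
    rw [mul_smul_comm, map_smul, smul_eq_mul]
  -- the complex and rational isotypic components
  set Wc : Submodule ℂ (G → ℂ) := LinearMap.range (convR ℂ eC) with hWcdef
  have hWcsub : IsSubrep (regRep ℂ G) Wc := by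
    intro g v hv
    obtain ⟨a, rfl⟩ := hv
    exact ⟨regRep ℂ G g a, convR_reg eC g a⟩
  set Wq : Submodule ℚ (G → ℚ) := LinearMap.range (convR ℚ eQ) with hWqdef
  have hWqsub : IsSubrep (regRep ℚ G) Wq := by
    intro g v hv
    obtain ⟨a, rfl⟩ := hv
    exact ⟨regRep ℚ G g a, convR_reg eQ g a⟩
  set τq : Representation ℚ G Wq := subRep (regRep ℚ G) Wq hWqsub with hτq
  -- Φ restricted to Wc is bijective onto End V
  have hinj : ∀ x : Wc, Phi ρ (x : G → ℂ) = 0 → x = 0 := by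
    rintro ⟨x, hx⟩ hx0
    obtain ⟨c, rfl⟩ := hx
    have hPc : Phi ρ c = 0 := by
      have h4 := Phi_conv ρ eC c
      rw [hPhi_eC, mul_one] at h4
      rw [← h4]; exact hx0
    have h5 : convR ℂ eC c = 0 := by
      funext h
      rw [hconvId c h, hPc]
      simp
    exact Subtype.ext h5
  have hsurj : ∀ T : V →ₗ[ℂ] V, ∃ x : Wc, Phi ρ (x : G → ℂ) = T := by
    intro T
    set cT : G → ℂ :=
      fun h => (n : ℂ)/(Fintype.card G : ℂ) * LinearMap.trace ℂ V (ρ h⁻¹ * T) with hcT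
    have hPcT : Phi ρ cT = T := by
      rw [Phi_apply]
      have h6 : ∀ g : G, cT g • (ρ g : V →ₗ[ℂ] V)
          = ((n : ℂ)/(Fintype.card G : ℂ))
              • (LinearMap.trace ℂ V (ρ g⁻¹ * T) • (ρ g : V →ₗ[ℂ] V)) := by
        intro g; rw [hcT, smul_smul]
      rw [Finset.sum_congr rfl fun g _ => h6 g, ← Finset.smul_sum, key hρ T, smul_smul]
      rw [div_mul_div_comm, mul_comm, div_self (by exact mul_ne_zero hN0 hn0), one_smul]
    refine ⟨⟨convR ℂ eC cT, ⟨cT, rfl⟩⟩, ?_⟩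
    show Phi ρ (convR ℂ eC cT) = T
    rw [Phi_conv, hPhi_eC, mul_one, hPcT]
  set Lphi : Wc →ₗ[ℂ] (V →ₗ[ℂ] V) := (Phi ρ).comp Wc.subtype with hLphi
  have hLphib : Function.Bijective Lphi := by
    constructor
    · rw [← LinearMap.ker_eq_bot, LinearMap.ker_eq_bot']
      intro m hm
      exact hinj m hm
    · intro T
      obtain ⟨x, hx⟩ := hsurj T
      exact ⟨x, hx⟩
  set e2 : Wc ≃ₗ[ℂ] (V →ₗ[ℂ] V) := LinearEquiv.ofBijective Lphi hLphib with he2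
  have hiso2 : RepIso (subRep (regRep ℂ G) Wc hWcsub) (endRep ρ) := by
    refine ⟨e2, fun g x => ?_⟩
    show Lphi (subRep (regRep ℂ G) Wc hWcsub g x) = endRep ρ g (Lphi x)
    show Phi ρ (regRep ℂ G g (x : G → ℂ)) = endRep ρ g (Phi ρ (x : G → ℂ))
    rw [Phi_reg]
    rfl
  -- End V ≅ V^n
  set b : Module.Basis (Fin n) ℂ V := Module.finBasis ℂ V with hb
  have hconstr_symm : ∀ f : V →ₗ[ℂ] V, (b.constr ℂ).symm f = fun i => f (b i) := by
    intro f
    apply (b.constr ℂ).injective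
    rw [LinearEquiv.apply_symm_apply]
    refine (Module.Basis.ext b fun i => ?_).symm
    rw [Module.Basis.constr_basis]
  have hiso3 : RepIso (endRep ρ) (piRep fun _ : Fin n => ρ) := by
    refine ⟨(b.constr ℂ).symm, fun g f => ?_⟩
    rw [hconstr_symm, hconstr_symm]
    funext i
    show (ρ g ∘ₗ f) (b i) = ρ g ((fun i => f (b i)) i)
    rfl
  -- base change: ℂ ⊗ Wq ≅ Wc
  set cmap : (G → ℚ) →ₗ[ℚ] (G → ℂ) := (Algebra.linearMap ℚ ℂ).compLeft G with hcmap
  have hcmap_apply : ∀ (a : G → ℚ) (x : G), cmap a x = ((a x : ℚ) : ℂ) := fun a x => rfl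
  have hcmap_conv : ∀ a : G → ℚ, cmap (convR ℚ eQ a) = convR ℂ eC (cmap a) := by
    intro a
    funext h
    rw [hcmap_apply, convR_apply, convR_apply]
    push_cast
    refine Finset.sum_congr rfl fun g _ => ?_
    rw [hcmap_apply, heCrat]
  have hcmap_reg : ∀ (g : G) (a : G → ℚ), cmap (regRep ℚ G g a) = regRep ℂ G g (cmap a) :=
    fun g a => rfl
  have hcmap_single : ∀ g : G, cmap (Pi.single g (1 : ℚ)) = Pi.single g (1 : ℂ) := by
    intro g
    funext x
    rw [hcmap_apply]
    by_cases hxg : x = g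
    · subst hxg; simp
    · simp [Pi.single_apply, hxg]
  set L0 : (ℂ ⊗[ℚ] ↥Wq) →ₗ[ℂ] (G → ℂ) :=
    LinearMap.liftBaseChange ℂ (cmap ∘ₗ Wq.subtype) with hL0
  have hL0_tmul : ∀ (c : ℂ) (w : Wq), L0 (c ⊗ₜ w) = c • cmap (w : G → ℚ) := by
    intro c w
    rw [hL0, LinearMap.liftBaseChange_tmul]
    rfl
  -- L0 is injective
  set E0 : (ℂ ⊗[ℚ] (G → ℚ)) →ₗ[ℂ] (G → ℂ) := LinearMap.liftBaseChange ℂ cmap with hE0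
  have hE0b : Function.Bijective E0 := by
    set B1 : Module.Basis G ℂ (ℂ ⊗[ℚ] (G → ℚ)) := (Pi.basisFun ℚ G).baseChange ℂ with hB1
    have hE0eq : E0 = (B1.equiv (Pi.basisFun ℂ G) (Equiv.refl G)).toLinearMap := by
      refine Module.Basis.ext B1 fun g => ?_
      rw [LinearEquiv.coe_coe, Module.Basis.equiv_apply, Equiv.refl_apply]
      rw [hB1, Module.Basis.baseChange_apply, hE0, LinearMap.liftBaseChange_tmul, one_smul]
      rw [Pi.basisFun_apply]
      show cmap (Pi.single g 1) = Pi.single g 1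
      exact hcmap_single g
    rw [hE0eq]
    exact (B1.equiv (Pi.basisFun ℂ G) (Equiv.refl G)).bijective
  have hL0comp : L0 = E0 ∘ₗ LinearMap.baseChange ℂ Wq.subtype := by
    apply LinearMap.ext
    intro x
    induction x using TensorProduct.induction_on with
    | zero => simp
    | tmul c w =>
        rw [hL0_tmul, LinearMap.comp_apply, LinearMap.baseChange_tmul, hE0,
          LinearMap.liftBaseChange_tmul]
        rfl
    | add x y hx hy => simp only [map_add, hx, hy]
  have hL0inj : Function.Injective L0 := by
    have h1 : Function.Injective (LinearMap.baseChange ℂ Wq.subtype) := by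
      rw [LinearMap.baseChange_eq_ltensor]
      exact Module.Flat.lTensor_preserves_injective_linearMap _
        (Submodule.injective_subtype Wq)
    rw [hL0comp, LinearMap.coe_comp]
    exact Function.Injective.comp hE0b.1 h1
  -- range of L0 is Wc
  have hL0mem : ∀ x : ℂ ⊗[ℚ] ↥Wq, L0 x ∈ Wc := by
    intro x
    induction x using TensorProduct.induction_on with
    | zero => simp
    | tmul c w =>
        rw [hL0_tmul]
        refine Submodule.smul_mem _ _ ?_
        obtain ⟨a, ha⟩ := w.2
        rw [← ha, hcmap_conv]
        exact ⟨cmap a, rfl⟩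
    | add x y hx hy => rw [map_add]; exact Submodule.add_mem _ hx hy
  have hL0surj : ∀ y : G → ℂ, y ∈ Wc → ∃ x : ℂ ⊗[ℚ] ↥Wq, L0 x = y := by
    rintro y ⟨c, rfl⟩
    have hc : c = ∑ g : G, c g • (Pi.single g (1 : ℂ) : G → ℂ) := by
      funext x
      rw [Finset.sum_apply]
      simp [Pi.single_apply, mul_comm]
    refine ⟨∑ g : G, c g • (((1 : ℂ) ⊗ₜ
      (⟨convR ℚ eQ (Pi.single g 1), ⟨Pi.single g 1, rfl⟩⟩ : Wq)) : ℂ ⊗[ℚ] ↥Wq), ?_⟩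
    rw [map_sum]
    have hterm2 : ∀ g : G, L0 (c g • (((1 : ℂ) ⊗ₜ
          (⟨convR ℚ eQ (Pi.single g 1), ⟨Pi.single g 1, rfl⟩⟩ : Wq)) : ℂ ⊗[ℚ] ↥Wq))
        = c g • convR ℂ eC (Pi.single g (1:ℂ)) := by
      intro g
      rw [map_smul, hL0_tmul, one_smul]
      congr 1
      show cmap (convR ℚ eQ (Pi.single g 1)) = convR ℂ eC (Pi.single g (1:ℂ))
      rw [hcmap_conv, hcmap_single]
    rw [Finset.sum_congr rfl fun g _ => hterm2 g]
    conv_rhs => rw [hc]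
    rw [map_sum]
    exact Finset.sum_congr rfl fun g _ => (map_smul _ _ _).symm
  set L0r : (ℂ ⊗[ℚ] ↥Wq) →ₗ[ℂ] Wc := L0.codRestrict Wc hL0mem with hL0r
  have hL0rb : Function.Bijective L0r := by
    constructor
    · intro x y hxy
      apply hL0inj
      have := congrArg (Subtype.val) hxy
      exact this
    · rintro ⟨y, hy⟩
      obtain ⟨x, hx⟩ := hL0surj y hy
      exact ⟨x, Subtype.ext hx⟩
  have hiso1 : RepIso (complexify τq) (subRep (regRep ℂ G) Wc hWcsub) := by
    refine ⟨LinearEquiv.ofBijective L0r hL0rb, fun g x => ?_⟩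
    show L0r (complexify τq g x) = subRep (regRep ℂ G) Wc hWcsub g (L0r x)
    apply Subtype.ext
    show L0 (LinearMap.baseChange ℂ (τq g) x) = regRep ℂ G g (L0 x)
    induction x using TensorProduct.induction_on with
    | zero => simp
    | tmul c w =>
        rw [LinearMap.baseChange_tmul, hL0_tmul, hL0_tmul]
        have hval : ((τq g w : Wq) : G → ℚ) = regRep ℚ G g (w : G → ℚ) := rfl
        rw [hval, hcmap_reg, map_smul]
    | add x y hx hy => simp only [map_add, hx, hy, map_add]
  -- transport Wq to a small type
  obtain ⟨m, ⟨bw⟩⟩ : ∃ m : ℕ, Nonempty (Module.Basis (Fin m) ℚ ↥Wq) :=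
    ⟨Module.finrank ℚ ↥Wq, ⟨Module.finBasis ℚ ↥Wq⟩⟩
  have hfinal : RepIso (complexify (transportRep τq bw.equivFun)) (piRep fun _ : Fin n => ρ) :=
    RepIso_trans (repIso_complexify_transport τq bw.equivFun)
      (RepIso_trans hiso1 (RepIso_trans hiso2 hiso3))
  exact ⟨⟨Fin m → ℚ, transportRep τq bw.equivFun⟩, n, hnpos, hfinal⟩

end Paper
end

section
/- Let G be a finite group and W an irreducible representation of G over ℚ whose complexification decomposes as W ⊗_ℚ ℂ ≅ ⊕_{i∈I} ρ_i^{⊕s}, where the ρ_i are pairwise non-isomorphic irreducible complex representations, each of the same dimension d, and s is a positive integer. Set 𝔻 = End_G(W), a division algebra over ℚ, and regard W as a left 𝔻-vector space. Then dim_𝔻 W = d/s; in particular, s divides d. -/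
open scoped TensorProduct

namespace Paper

variable {k : Type*} [Field k] {G : Type*} [Group G]

section Schur

variable {V W : Type*} [AddCommGroup V] [Module k V] [AddCommGroup W] [Module k W]

theorem mem_repHom {ρ : Representation k G V} {π : Representation k G W} {f : V →ₗ[k] W} :
    f ∈ repHom ρ π ↔ ∀ (g : G) (v : V), f (ρ g v) = π g (f v) := Iff.rfl

theorem ker_isSubrep {ρ : Representation k G V} {π : Representation k G W} {f : V →ₗ[k] W}
    (hf : ∀ g v, f (ρ g v) = π g (f v)) : IsSubrep ρ (LinearMap.ker f) := by
  intro g v hv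
  simp only [LinearMap.mem_ker] at hv ⊢
  rw [hf, hv, map_zero]

theorem range_isSubrep {ρ : Representation k G V} {π : Representation k G W} {f : V →ₗ[k] W}
    (hf : ∀ g v, f (ρ g v) = π g (f v)) : IsSubrep π (LinearMap.range f) := by
  rintro g - ⟨v, rfl⟩
  exact ⟨ρ g v, hf g v⟩

theorem schur_zero {ρ : Representation k G V} {π : Representation k G W} {f : V →ₗ[k] W}
    (hρ : IsIrred ρ) (hf : ∀ g v, f (ρ g v) = π g (f v)) (hk : LinearMap.ker f ≠ ⊥) :
    f = 0 := by
  rcases hρ.2 _ (ker_isSubrep hf) with h | h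
  · exact absurd h hk
  · exact LinearMap.ker_eq_top.mp h

theorem schur_bijective {ρ : Representation k G V} {π : Representation k G W} {f : V →ₗ[k] W}
    (hρ : IsIrred ρ) (hπ : IsIrred π) (hf : ∀ g v, f (ρ g v) = π g (f v)) (h0 : f ≠ 0) :
    Function.Bijective f := by
  constructor
  · rw [← LinearMap.ker_eq_bot]
    by_contra hk
    exact h0 (schur_zero hρ hf hk)
  · rw [← LinearMap.range_eq_top]
    rcases hπ.2 _ (range_isSubrep hf) with h | h
    · exact absurd (LinearMap.range_eq_bot.mp h) h0
    · exact h

theorem repHom_eq_bot_of_not_repIso {ρ : Representation k G V} {π : Representation k G W}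
    (hρ : IsIrred ρ) (hπ : IsIrred π) (h : ¬ RepIso ρ π) : repHom ρ π = ⊥ := by
  rw [eq_bot_iff]
  intro f hf
  rw [Submodule.mem_bot]
  by_contra h0
  exact h ⟨LinearEquiv.ofBijective f (schur_bijective hρ hπ hf h0), fun g v => hf g v⟩

theorem finrank_repHom_self_of_isAlgClosed [IsAlgClosed k] [FiniteDimensional k V]
    (ρ : Representation k G V) (hρ : IsIrred ρ) :
    Module.finrank k (repHom ρ ρ) = 1 := by
  obtain ⟨v0, hv0⟩ := hρ.1
  haveI : Nontrivial V := ⟨v0, 0, hv0⟩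
  have hid : (LinearMap.id : V →ₗ[k] V) ∈ repHom ρ ρ := fun g v => rfl
  have hid0 : (LinearMap.id : V →ₗ[k] V) ≠ 0 := by
    intro h
    exact hv0 (by simpa using LinearMap.ext_iff.1 h v0)
  have hspan : repHom ρ ρ = Submodule.span k {(LinearMap.id : V →ₗ[k] V)} := by
    apply le_antisymm
    · intro f hf
      obtain ⟨μ, hμ⟩ := Module.End.exists_eigenvalue (f : Module.End k V)
      have hmem : f - μ • LinearMap.id ∈ repHom ρ ρ :=
        sub_mem hf (Submodule.smul_mem _ μ hid)
      have hker : LinearMap.ker (f - μ • (LinearMap.id : V →ₗ[k] V)) ≠ ⊥ := by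
        obtain ⟨w, hw⟩ := hμ.exists_hasEigenvector
        intro hbot
        apply hw.2
        have hz : (f - μ • (LinearMap.id : V →ₗ[k] V)) w = 0 := by
          rw [LinearMap.sub_apply, LinearMap.smul_apply, LinearMap.id_apply,
            hw.apply_eq_smul, sub_self]
        have hmem' : w ∈ LinearMap.ker (f - μ • (LinearMap.id : V →ₗ[k] V)) := hz
        rw [hbot, Submodule.mem_bot] at hmem'
        exact hmem'
      have hzero := schur_zero hρ (fun g v => hmem g v) hker
      have hf' : f = μ • LinearMap.id := by rwa [sub_eq_zero] at hzero
      rw [hf']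
      exact Submodule.smul_mem _ _ (Submodule.mem_span_singleton_self _)
    · rw [Submodule.span_le, Set.singleton_subset_iff]
      exact hid
  rw [hspan]
  exact finrank_span_singleton hid0

theorem invariants_linHom_eq_repHom (ρ : Representation k G V) (π : Representation k G W) :
    (Representation.linHom ρ π).invariants = repHom ρ π := by
  have hcan : ∀ (σ : Representation k G V) (g : G) (v : V), σ g⁻¹ (σ g v) = v := by
    intro σ g v
    rw [← Module.End.mul_apply, ← map_mul, inv_mul_cancel, map_one, Module.End.one_apply]
  ext f
  rw [Representation.mem_invariants, mem_repHom]
  constructor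
  · intro h g v
    have h1 := LinearMap.ext_iff.1 (h g) (ρ g v)
    simpa [Representation.linHom_apply, hcan ρ g v] using h1.symm
  · intro h g
    ext v
    have h2 : ρ g (ρ g⁻¹ v) = v := by
      rw [← Module.End.mul_apply, ← map_mul, mul_inv_cancel, map_one, Module.End.one_apply]
    show (π g) (f ((ρ g⁻¹) v)) = f v
    rw [← h g (ρ g⁻¹ v), h2]

theorem finrank_repHom_congr {π : Representation k G V} {σ : Representation k G W}
    (h : RepIso π σ) :
    Module.finrank k (repHom π π) = Module.finrank k (repHom σ σ) := by
  obtain ⟨e, he⟩ := h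
  have hsymm : ∀ (g : G) (w : W), e.symm (σ g w) = π g (e.symm w) := by
    intro g w
    apply e.injective
    rw [he, e.apply_symm_apply, e.apply_symm_apply]
  have hmap : Submodule.map (e.conj : Module.End k V ≃ₗ[k] Module.End k W).toLinearMap
      (repHom π π) = repHom σ σ := by
    ext f
    simp only [Submodule.mem_map, LinearEquiv.coe_coe]
    constructor
    · rintro ⟨f0, h0, rfl⟩ g w
      rw [LinearEquiv.conj_apply_apply, LinearEquiv.conj_apply_apply, hsymm, h0, he]
    · intro hf
      refine ⟨e.symm.conj f, ?_, ?_⟩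
      · intro g v
        rw [LinearEquiv.conj_apply_apply, LinearEquiv.conj_apply_apply, LinearEquiv.symm_symm,
          he, hf, hsymm]
      · apply LinearMap.ext
        intro w
        rw [LinearEquiv.conj_apply_apply, LinearEquiv.conj_apply_apply, LinearEquiv.symm_symm,
          e.apply_symm_apply, e.apply_symm_apply]
  calc Module.finrank k (repHom π π)
      = Module.finrank k (Submodule.map (e.conj : Module.End k V ≃ₗ[k] Module.End k W).toLinearMap
          (repHom π π)) := (LinearEquiv.submoduleMap e.conj (repHom π π)).finrank_eq
    _ = Module.finrank k (repHom σ σ) := by rw [hmap]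

theorem trace_linHom_self [FiniteDimensional k V] (ρ : Representation k G V) (g : G) :
    LinearMap.trace k (V →ₗ[k] V) ((Representation.linHom ρ ρ) g) =
      LinearMap.trace k V (ρ g⁻¹) * LinearMap.trace k V (ρ g) := by
  classical
  let e : Module.Dual k V ⊗[k] V ≃ₗ[k] (V →ₗ[k] V) := dualTensorHomEquiv k V V
  have he : ∀ x, e x = dualTensorHom k V V x := fun x => dualTensorHomEquivOfBasis_apply (Module.Free.chooseBasis k V) x
  have hcomm := Representation.dualTensorHom_comm ρ ρ g
  have hconj : (Representation.linHom ρ ρ) g =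
      e.conj (TensorProduct.map (ρ.dual g) (ρ g)) := by
    apply LinearMap.ext
    intro f
    rw [LinearEquiv.conj_apply_apply]
    have h1 := LinearMap.ext_iff.1 hcomm (e.symm f)
    simp only [LinearMap.comp_apply] at h1
    rw [he, h1, ← he, e.apply_symm_apply]
  have htr := LinearMap.trace_conj' (R := k) (M := Module.Dual k V ⊗[k] V)
    (N := V →ₗ[k] V) (TensorProduct.map (ρ.dual g) (ρ g)) e
  rw [hconj, htr, LinearMap.trace_tensorProduct', Representation.dual_apply,
    LinearMap.trace_transpose']

theorem card_mul_finrank_invariants [Fintype G] [CharZero k] {M : Type*} [AddCommGroup M]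
    [Module k M] [FiniteDimensional k M] (ρ : Representation k G M) :
    (Fintype.card G : k) * (Module.finrank k ρ.invariants : k) =
      ∑ g : G, LinearMap.trace k M (ρ g) := by
  have hc : (Fintype.card G : k) ≠ 0 := Nat.cast_ne_zero.mpr Fintype.card_ne_zero
  letI := invertibleOfNonzero hc
  have h := (Representation.isProj_averageMap ρ).trace
  have h2 : ρ.averageMap = ⅟(Fintype.card G : k) • ∑ g : G, (ρ g : M →ₗ[k] M) := by
    show Representation.asAlgebraHom ρ (GroupAlgebra.average k G) = _
    rw [GroupAlgebra.average, map_smul, map_sum]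
    simp [Representation.asAlgebraHom_of]
  rw [h2, map_smul, map_sum] at h
  rw [← h, smul_eq_mul, ← mul_assoc, mul_invOf_self, one_mul]

end Schur

section PiDecomp

variable {ι' : Type*} [Fintype ι'] [DecidableEq ι']
variable {M : ι' → Type*} [∀ i, AddCommGroup (M i)] [∀ i, Module k (M i)]

theorem piRep_apply (ρ : ∀ i, Representation k G (M i)) (g : G) (v : ∀ i, M i) (i : ι') :
    piRep ρ g v i = ρ i g (v i) := rfl

theorem piRep_single (ρ : ∀ i, Representation k G (M i)) (g : G) (p : ι') (v : M p) :
    piRep ρ g (Pi.single p v) = Pi.single p (ρ p g v) := by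
  funext j
  rcases eq_or_ne j p with rfl | h
  · simp [piRep_apply]
  · simp [piRep_apply, Pi.single_eq_of_ne h, Pi.single_eq_of_ne h]

/-- The decomposition of the endomorphism space of a direct sum. -/
noncomputable def homPiEquiv :
    ((∀ i, M i) →ₗ[k] ∀ i, M i) ≃ₗ[k] ∀ pq : ι' × ι', (M pq.1 →ₗ[k] M pq.2) := by
  refine LinearEquiv.ofLinear
    { toFun := fun f => fun pq => (LinearMap.proj pq.2) ∘ₗ f ∘ₗ (LinearMap.single k M pq.1)
      map_add' := by intro f g; funext pq; ext v; simp
      map_smul' := by intro c f; funext pq; ext v; simp }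
    { toFun := fun c => LinearMap.pi fun q => ∑ p : ι', (c (p, q)) ∘ₗ (LinearMap.proj p)
      map_add' := by intro c d; ext v q; simp [Finset.sum_add_distrib]
      map_smul' := by intro a c; ext v q; simp [Finset.smul_sum] }
    ?_ ?_
  · apply LinearMap.ext
    intro c
    funext pq
    apply LinearMap.ext
    intro v
    obtain ⟨p, q⟩ := pq
    simp only [LinearMap.coe_comp, LinearMap.coe_mk, AddHom.coe_mk, Function.comp_apply,
      LinearMap.pi_apply, LinearMap.sum_apply, LinearMap.comp_apply, LinearMap.proj_apply,
      LinearMap.single_apply, LinearMap.id_apply]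
    rw [Finset.sum_eq_single p]
    · simp
    · intro p' _ hp'
      simp [Pi.single_eq_of_ne hp']
    · intro hp
      exact absurd (Finset.mem_univ p) hp
  · apply LinearMap.ext
    intro f
    apply LinearMap.ext
    intro v
    funext q
    simp only [LinearMap.coe_comp, LinearMap.coe_mk, AddHom.coe_mk, Function.comp_apply,
      LinearMap.pi_apply, LinearMap.sum_apply, LinearMap.comp_apply, LinearMap.proj_apply,
      LinearMap.single_apply, LinearMap.id_apply]
    have : ∀ p : ι', (LinearMap.proj q ∘ₗ f) (Pi.single p (v p))
        = LinearMap.proj (R := k) (φ := M) q (f (Pi.single p (v p))) := fun p => rfl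
    calc (∑ p : ι', f (Pi.single p (v p)) q)
        = ∑ p : ι', (LinearMap.proj (R := k) (φ := M) q ∘ₗ f) (Pi.single p (v p)) := rfl
      _ = (LinearMap.proj (R := k) (φ := M) q ∘ₗ f) (∑ p : ι', Pi.single p (v p)) := by
          rw [map_sum]
      _ = f v q := by rw [Finset.univ_sum_single v]; rfl

theorem homPiEquiv_apply (f : (∀ i, M i) →ₗ[k] ∀ i, M i) (pq : ι' × ι') (v : M pq.1) :
    homPiEquiv (k := k) f pq v = f (Pi.single pq.1 v) pq.2 := rfl

/-- A product of submodules is linearly equivalent to the product. -/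
def submodulePiEquiv {N : ι' → Type*} [∀ i, AddCommGroup (N i)] [∀ i, Module k (N i)]
    (P : ∀ i, Submodule k (N i)) :
    ↥(Submodule.pi Set.univ P) ≃ₗ[k] ∀ i, ↥(P i) where
  toFun x := fun i => ⟨x.1 i, x.2 i (Set.mem_univ i)⟩
  map_add' _ _ := rfl
  map_smul' _ _ := rfl
  invFun c := ⟨fun i => (c i).1, fun i _ => (c i).2⟩
  left_inv x := rfl
  right_inv c := rfl

theorem finrank_repHom_piRep [FiniteDimensional k (∀ i, M i)] [∀ i, FiniteDimensional k (M i)]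
    (ρ : ∀ i, Representation k G (M i)) :
    Module.finrank k (repHom (piRep ρ) (piRep ρ)) =
      ∑ pq : ι' × ι', Module.finrank k (repHom (ρ pq.1) (ρ pq.2)) := by
  have hmap : Submodule.map (homPiEquiv (k := k) (M := M)).toLinearMap
      (repHom (piRep ρ) (piRep ρ)) =
      Submodule.pi Set.univ (fun pq : ι' × ι' => repHom (ρ pq.1) (ρ pq.2)) := by
    ext c
    simp only [Submodule.mem_map, LinearEquiv.coe_coe, Submodule.mem_pi, Set.mem_univ,
      forall_true_left]
    constructor
    · rintro ⟨f, hf, rfl⟩ pq g v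
      show f (Pi.single pq.1 (ρ pq.1 g v)) pq.2
          = ρ pq.2 g (f (Pi.single pq.1 v) pq.2)
      rw [← piRep_single ρ g pq.1 v, hf g (Pi.single pq.1 v)]
      rfl
    · intro hc
      refine ⟨(homPiEquiv (k := k) (M := M)).symm c, ?_,
        (homPiEquiv (k := k) (M := M)).apply_symm_apply c⟩
      intro g v
      have hsymm : ∀ (w : ∀ i, M i) (q : ι'),
          (homPiEquiv (k := k) (M := M)).symm c w q = ∑ p : ι', c (p, q) (w p) := by
        intro w q
        simp [homPiEquiv, LinearMap.pi_apply]
      apply funext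
      intro q
      rw [piRep_apply, hsymm, hsymm, map_sum]
      refine Finset.sum_congr rfl fun p _ => ?_
      exact hc (p, q) g (v p)
  calc Module.finrank k (repHom (piRep ρ) (piRep ρ))
      = Module.finrank k (Submodule.map (homPiEquiv (k := k) (M := M)).toLinearMap
          (repHom (piRep ρ) (piRep ρ))) :=
        (LinearEquiv.submoduleMap _ _).finrank_eq
    _ = Module.finrank k
          (Submodule.pi Set.univ (fun pq : ι' × ι' => repHom (ρ pq.1) (ρ pq.2))) := by
        rw [hmap]
    _ = Module.finrank k (∀ pq : ι' × ι', ↥(repHom (ρ pq.1) (ρ pq.2))) :=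
        (submodulePiEquiv _).finrank_eq
    _ = ∑ pq : ι' × ι', Module.finrank k (repHom (ρ pq.1) (ρ pq.2)) :=
        Module.finrank_pi_fintype k

end PiDecomp
set_option maxHeartbeats 1000000 in
set_option synthInstance.maxHeartbeats 1000000 in
/-- in the situation of the previous statement, `W` has a basis of
cardinality `d/s` over the division algebra `𝔻 = End_G(W)`; in particular, the Schur
index `s` divides `d`. -/
theorem statement_11 {G : Type*} [Group G] [Fintype G]
    {W : Type*} [AddCommGroup W] [Module ℚ W] [FiniteDimensional ℚ W]
    (τ : Representation ℚ G W) (hτ : IsIrred τ)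
    {ι : Type} [Fintype ι] (Vi : ι → CxRep G) (d s : ℕ) (hs : 0 < s)
    (hirr : ∀ i, IsIrred (Vi i).rep)
    (hdiff : ∀ i j, i ≠ j → ¬ RepIso (Vi i).rep (Vi j).rep)
    (hdim : ∀ i, Module.finrank ℂ (Vi i).carrier = d)
    (hdec : RepIso (complexify τ) (piRep fun p : ι × Fin s => (Vi p.1).rep)) :
    s ∣ d ∧
    ∃ b : Fin (d / s) → W,
      (∀ w : W, ∃ c : Fin (d / s) →
          Subalgebra.centralizer ℚ (Set.range ⇑τ : Set (Module.End ℚ W)),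
        w = ∑ i, (c i : Module.End ℚ W) (b i)) ∧
      (∀ c : Fin (d / s) →
          Subalgebra.centralizer ℚ (Set.range ⇑τ : Set (Module.End ℚ W)),
        (∑ i, (c i : Module.End ℚ W) (b i)) = 0 → ∀ i, c i = 0) := by
  classical
  obtain ⟨v0, hv0⟩ := hτ.1
  haveI : Nontrivial W := ⟨v0, 0, hv0⟩
  set D := Subalgebra.centralizer ℚ (Set.range ⇑τ : Set (Module.End ℚ W)) with hDdef
  have hmemD : ∀ f : Module.End ℚ W, f ∈ D ↔ ∀ (g : G) (v : W), f (τ g v) = τ g (f v) := by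
    intro f
    rw [hDdef, Subalgebra.mem_centralizer_iff]
    constructor
    · intro h g v
      have h' := h (τ g) (Set.mem_range_self g)
      calc f (τ g v) = (f * τ g) v := rfl
        _ = (τ g * f) v := by rw [← h']
        _ = τ g (f v) := rfl
    · rintro h x ⟨g, rfl⟩
      apply LinearMap.ext
      intro v
      exact (h g v).symm
  -- `D` is a division ring
  have hunit : ∀ a : ↥D, IsUnit a ∨ a = 0 := by
    intro a
    by_cases h0 : a = 0
    · exact Or.inr h0
    refine Or.inl ?_
    have h0' : (a : Module.End ℚ W) ≠ 0 := fun h => h0 (Subtype.ext h)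
    have hbij := schur_bijective hτ hτ ((hmemD _).1 a.2) h0'
    let u := LinearEquiv.ofBijective (a : Module.End ℚ W) hbij
    have hsm : ((u.symm : W →ₗ[ℚ] W)) ∈ D := by
      rw [hmemD]
      intro g v
      apply hbij.1
      calc (a : Module.End ℚ W) (u.symm (τ g v)) = u (u.symm (τ g v)) := rfl
        _ = τ g v := u.apply_symm_apply _
        _ = τ g (u (u.symm v)) := by rw [u.apply_symm_apply]
        _ = τ g ((a : Module.End ℚ W) (u.symm v)) := rfl
        _ = (a : Module.End ℚ W) (τ g (u.symm v)) := ((hmemD _).1 a.2 g _).symm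
    exact ⟨⟨a, ⟨(u.symm : W →ₗ[ℚ] W), hsm⟩,
      Subtype.ext (LinearMap.ext fun v => u.apply_symm_apply v),
      Subtype.ext (LinearMap.ext fun v => u.symm_apply_apply v)⟩, rfl⟩
  haveI : Nontrivial ↥D := ⟨1, 0, fun h => by
    have h' : (1 : Module.End ℚ W) = 0 := congrArg Subtype.val h
    exact hv0 (by simpa using LinearMap.ext_iff.1 h' v0)⟩
  letI : DivisionRing ↥D := DivisionRing.ofIsUnitOrEqZero hunit
  letI : Module ↥D W := Module.compHom W (Subalgebra.val D).toRingHom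
  have hsmul : ∀ (a : ↥D) (w : W), a • w = (a : Module.End ℚ W) w := fun _ _ => rfl
  letI : IsScalarTower ℚ ↥D W := ⟨fun q a w => by
    rw [hsmul, hsmul]
    have h1 : ((q • a : ↥D) : Module.End ℚ W) = q • (a : Module.End ℚ W) := rfl
    rw [h1, LinearMap.smul_apply]⟩
  letI : Module.Finite ↥D W := Module.Finite.of_restrictScalars_finite ℚ ↥D W
  -- dimension of `W` over `ℚ`
  have hcardW : Module.finrank ℚ W = (Fintype.card ι * s) * d := by
    obtain ⟨e, -⟩ := hdec
    have h1 : Module.finrank ℂ (ℂ ⊗[ℚ] W) = Module.finrank ℚ W := Module.finrank_baseChange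
    have h2 : Module.finrank ℂ (ℂ ⊗[ℚ] W) =
        Module.finrank ℂ (∀ p : ι × Fin s, (Vi p.1).carrier) := LinearEquiv.finrank_eq e
    have h3 : Module.finrank ℂ (∀ p : ι × Fin s, (Vi p.1).carrier) = (Fintype.card ι * s) * d := by
      rw [Module.finrank_pi_fintype ℂ]
      calc (∑ p : ι × Fin s, Module.finrank ℂ (Vi p.1).carrier)
          = ∑ _p : ι × Fin s, d := Finset.sum_congr rfl fun p _ => hdim p.1
        _ = (Fintype.card ι * s) * d := by
            simp [Finset.sum_const, Finset.card_univ, Fintype.card_prod, mul_assoc]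
    rw [← h1, h2, h3]
  -- dimension of `D` over `ℚ`
  set πc := complexify τ with hπcdef
  have hn12 : Module.finrank ℚ ((Representation.linHom τ τ).invariants)
      = Module.finrank ℂ ((Representation.linHom πc πc).invariants) := by
    have hA := card_mul_finrank_invariants (Representation.linHom τ τ)
    have hB := card_mul_finrank_invariants (Representation.linHom πc πc)
    have hχ : ∀ g : G, LinearMap.trace ℂ (ℂ ⊗[ℚ] W) (πc g) =
        ((LinearMap.trace ℚ W (τ g) : ℚ) : ℂ) := by
      intro g
      have h1 : πc g = LinearMap.baseChange ℂ (τ g) := rfl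
      rw [h1, LinearMap.trace_baseChange]
      exact eq_ratCast ((algebraMap ℚ ℂ : ℚ →+* ℂ)) _
    have hA' : (Fintype.card G : ℚ) *
        (Module.finrank ℚ ((Representation.linHom τ τ).invariants) : ℚ) =
        ∑ g : G, LinearMap.trace ℚ W (τ g⁻¹) * LinearMap.trace ℚ W (τ g) := by
      rw [hA]
      exact Finset.sum_congr rfl fun g _ => trace_linHom_self τ g
    have hB' : (Fintype.card G : ℂ) *
        (Module.finrank ℂ ((Representation.linHom πc πc).invariants) : ℂ) =
        ∑ g : G, ((LinearMap.trace ℚ W (τ g⁻¹) : ℚ) : ℂ) *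
          ((LinearMap.trace ℚ W (τ g) : ℚ) : ℂ) := by
      rw [hB]
      refine Finset.sum_congr rfl fun g _ => ?_
      rw [trace_linHom_self πc g, hχ g, hχ g⁻¹]
    have hcast : (Fintype.card G : ℂ) *
        (Module.finrank ℂ ((Representation.linHom πc πc).invariants) : ℂ) =
        (Fintype.card G : ℂ) *
        (Module.finrank ℚ ((Representation.linHom τ τ).invariants) : ℂ) := by
      rw [hB']
      have h1 : ((∑ g : G, LinearMap.trace ℚ W (τ g⁻¹) * LinearMap.trace ℚ W (τ g) : ℚ) : ℂ) =
          ∑ g : G, ((LinearMap.trace ℚ W (τ g⁻¹) : ℚ) : ℂ) *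
            ((LinearMap.trace ℚ W (τ g) : ℚ) : ℂ) := by
        push_cast
        rfl
      rw [← h1, ← hA']
      push_cast
      ring
    have hcard0 : (Fintype.card G : ℂ) ≠ 0 := Nat.cast_ne_zero.mpr Fintype.card_ne_zero
    have h2 := mul_left_cancel₀ hcard0 hcast
    exact_mod_cast h2.symm
  -- dimension of the complex commutant
  have hsum : (∑ pq : (ι × Fin s) × (ι × Fin s),
      Module.finrank ℂ (repHom (Vi pq.1.1).rep (Vi pq.2.1).rep)) = (Fintype.card ι * s) * s := by
    have hval : ∀ x y : ι × Fin s,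
        Module.finrank ℂ (repHom (Vi x.1).rep (Vi y.1).rep) = if x.1 = y.1 then 1 else 0 := by
      rintro ⟨i, a⟩ ⟨j, b⟩
      dsimp only
      by_cases h : i = j
      · subst h
        simp [finrank_repHom_self_of_isAlgClosed _ (hirr i)]
      · rw [repHom_eq_bot_of_not_repIso (hirr i) (hirr j) (hdiff i j h)]
        simp [h]
    rw [Fintype.sum_prod_type]
    have hx : ∀ x : ι × Fin s,
        (∑ y : ι × Fin s, Module.finrank ℂ (repHom (Vi x.1).rep (Vi y.1).rep)) = s := by
      intro x
      rw [Fintype.sum_prod_type]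
      calc (∑ j : ι, ∑ b : Fin s, Module.finrank ℂ (repHom (Vi x.1).rep (Vi j).rep))
          = ∑ j : ι, (if x.1 = j then (s : ℕ) else 0) := by
            refine Finset.sum_congr rfl fun j _ => ?_
            rw [Finset.sum_congr rfl fun b _ => hval x (j, b)]
            by_cases h : x.1 = j <;> simp [h]
        _ = s := by rw [Finset.sum_ite_eq]; simp
    calc (∑ x : ι × Fin s, ∑ y : ι × Fin s,
        Module.finrank ℂ (repHom (Vi x.1).rep (Vi y.1).rep))
        = ∑ _x : ι × Fin s, s := Finset.sum_congr rfl fun x _ => hx x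
      _ = (Fintype.card ι * s) * s := by
          simp [Finset.sum_const, Finset.card_univ, Fintype.card_prod, mul_assoc]
  have hn2 : Module.finrank ℂ (repHom πc πc) = (Fintype.card ι * s) * s := by
    rw [finrank_repHom_congr hdec,
      finrank_repHom_piRep (fun p : ι × Fin s => (Vi p.1).rep)]
    exact hsum
  have hDsub : Subalgebra.toSubmodule D = repHom τ τ := by
    ext f
    rw [Subalgebra.mem_toSubmodule, hmemD, mem_repHom]
  have hfinD : Module.finrank ℚ ↥D = Module.finrank ℚ (repHom τ τ) :=
    (LinearEquiv.ofEq _ _ hDsub).finrank_eq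
  have hn1 : Module.finrank ℚ ↥D = (Fintype.card ι * s) * s := by
    rw [hfinD, ← invariants_linHom_eq_repHom, hn12, invariants_linHom_eq_repHom, hn2]
  -- the tower law and arithmetic
  have hpos : 0 < Module.finrank ℚ W := Module.finrank_pos
  have hcs : 0 < Fintype.card ι * s := by
    rcases Nat.eq_zero_or_pos (Fintype.card ι * s) with h | h
    · rw [hcardW, h] at hpos
      simp at hpos
    · exact h
  have hmul := Module.finrank_mul_finrank ℚ ↥D W
  rw [hn1, hcardW] at hmul
  have hsm : s * Module.finrank ↥D W = d := by
    rw [mul_assoc] at hmul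
    exact Nat.eq_of_mul_eq_mul_left hcs hmul
  have hm : Module.finrank ↥D W = d / s := by
    rw [← hsm, Nat.mul_div_cancel_left _ hs]
  refine ⟨⟨Module.finrank ↥D W, hsm.symm⟩, ?_⟩
  let b : Module.Basis (Fin (d / s)) ↥D W := Module.finBasisOfFinrankEq ↥D W hm
  refine ⟨⇑b, ?_, ?_⟩
  · intro w
    exact ⟨fun i => b.repr w i, (b.sum_repr w).symm⟩
  · intro c h i
    exact Fintype.linearIndependent_iff.mp b.linearIndependent c h i

end Paper
end

section
/- Let G be a finite group, H a normal subgroup of G, and V, V' finite-dimensional representations of G over ℚ. Assume that every irreducible ℚ-representation of G that occurs with positive multiplicity in both V and V' contains H in its kernel. Then (V ⊗ V')^G = (V^H ⊗ V'^H)^G; that is, the natural inclusion of the G-invariants of V^H ⊗ V'^H into the G-invariants of V ⊗ V' is an isomorphism. -/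
open scoped TensorProduct

namespace Paper

variable {k : Type*} [Field k] {G : Type*} [Group G]

section Statement18Aux

attribute [local instance] Fintype.ofFinite

variable {G : Type*} [Group G] [Fintype G]
variable {V : Type*} [AddCommGroup V] [Module ℚ V]

noncomputable def avg (ρ : Representation ℚ G V) (H : Subgroup G) : V →ₗ[ℚ] V :=
  (Fintype.card H : ℚ)⁻¹ • ∑ h : H, ρ (h : G)

theorem avg_apply (ρ : Representation ℚ G V) (H : Subgroup G) (v : V) :
    avg ρ H v = (Fintype.card H : ℚ)⁻¹ • ∑ h : H, ρ (h : G) v := by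
  simp [avg]

theorem avg_comp_apply (ρ : Representation ℚ G V) (H : Subgroup G) {h : G} (hh : h ∈ H)
    (v : V) : avg ρ H (ρ h v) = avg ρ H v := by
  simp only [avg_apply]
  congr 1
  exact Fintype.sum_equiv (Equiv.mulRight (⟨h, hh⟩ : H)) _ _ (fun h' => by
    simp [← Module.End.mul_apply, ← map_mul])

theorem comp_avg_apply (ρ : Representation ℚ G V) (H : Subgroup G) {h : G} (hh : h ∈ H)
    (v : V) : ρ h (avg ρ H v) = avg ρ H v := by
  simp only [avg_apply, map_smul, map_sum]
  congr 1
  exact Fintype.sum_equiv (Equiv.mulLeft (⟨h, hh⟩ : H)) _ _ (fun h' => by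
    simp [← Module.End.mul_apply, ← map_mul])

theorem rep_avg_comm (ρ : Representation ℚ G V) (H : Subgroup G) [H.Normal] (g : G)
    (v : V) : ρ g (avg ρ H v) = avg ρ H (ρ g v) := by
  simp only [avg_apply, map_smul, map_sum]
  congr 1
  refine Fintype.sum_equiv (MulAut.conjNormal g).toEquiv _ _ (fun h' => ?_)
  simp only [MulEquiv.toEquiv_eq_coe, EquivLike.coe_coe, ← Module.End.mul_apply, ← map_mul,
    MulAut.conjNormal_apply]
  congr 2
  group

theorem avg_mem_fixSub (ρ : Representation ℚ G V) (H : Subgroup G) (v : V) :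
    avg ρ H v ∈ fixSub ρ H := fun h hh => comp_avg_apply ρ H hh v

theorem avg_of_mem_fixSub (ρ : Representation ℚ G V) (H : Subgroup G) {v : V}
    (hv : v ∈ fixSub ρ H) : avg ρ H v = v := by
  rw [avg_apply]
  have : ∀ h : H, ρ (h : G) v = v := fun h => hv h h.2
  rw [Finset.sum_congr rfl (fun h _ => this h), Finset.sum_const]
  have hc : (Fintype.card H : ℚ) ≠ 0 := by
    exact_mod_cast Fintype.card_ne_zero
  rw [← Nat.cast_smul_eq_nsmul ℚ, smul_smul]
  simp [inv_mul_cancel₀ hc]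

theorem avg_avg (ρ : Representation ℚ G V) (H : Subgroup G) (v : V) :
    avg ρ H (avg ρ H v) = avg ρ H v :=
  avg_of_mem_fixSub ρ H (avg_mem_fixSub ρ H v)

theorem exists_invariant_form [FiniteDimensional ℚ V] (ρ : Representation ℚ G V) :
    ∃ B : V →ₗ[ℚ] V →ₗ[ℚ] ℚ, (∀ v w, B v w = B w v) ∧ (∀ v, v ≠ 0 → 0 < B v v) ∧
      (∀ (g : G) (v w : V), B (ρ g v) (ρ g w) = B v w) := by
  classical
  set b := Module.finBasis ℚ V with hb
  set B0 : V →ₗ[ℚ] V →ₗ[ℚ] ℚ :=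
    LinearMap.mk₂ ℚ (fun v w => ∑ i, b.repr v i * b.repr w i)
      (by intro v v' w; simp [Finset.sum_add_distrib, add_mul])
      (by intro c v w; simp [Finset.mul_sum, mul_assoc])
      (by intro v w w'; simp [Finset.sum_add_distrib, mul_add])
      (by intro c v w; simp [Finset.mul_sum, mul_left_comm, mul_comm, mul_assoc]) with hB0
  have hB0nn : ∀ v, 0 ≤ B0 v v := by
    intro v
    simp only [hB0, LinearMap.mk₂_apply]
    apply Finset.sum_nonneg
    intro i _
    exact mul_self_nonneg _
  have hB0pos : ∀ v, v ≠ 0 → 0 < B0 v v := by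
    intro v hv
    have : b.repr v ≠ 0 := fun h => hv (by simpa using congrArg b.repr.symm h)
    obtain ⟨i, hi⟩ := Finsupp.ne_iff.mp this
    simp only [hB0, LinearMap.mk₂_apply]
    apply Finset.sum_pos' (fun i _ => mul_self_nonneg _)
    refine ⟨i, Finset.mem_univ i, ?_⟩
    simp only [Finsupp.coe_zero, Pi.zero_apply] at hi
    exact mul_self_pos.mpr hi
  refine ⟨LinearMap.mk₂ ℚ (fun v w => ∑ g : G, B0 (ρ g v) (ρ g w))
      (by intro v v' w; simp [Finset.sum_add_distrib])
      (by intro c v w; simp [Finset.mul_sum])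
      (by intro v w w'; simp [Finset.sum_add_distrib])
      (by intro c v w; simp [Finset.mul_sum]), ?_, ?_, ?_⟩
  · intro v w
    simp only [LinearMap.mk₂_apply]
    congr 1; ext g
    simp [hB0, mul_comm]
  · intro v hv
    simp only [LinearMap.mk₂_apply]
    apply Finset.sum_pos' (fun g _ => hB0nn _)
    refine ⟨1, Finset.mem_univ 1, ?_⟩
    simpa using hB0pos v hv
  · intro g v w
    simp only [LinearMap.mk₂_apply]
    exact Fintype.sum_equiv (Equiv.mulRight g) _ _ (fun g' => by
      simp [← Module.End.mul_apply, ← map_mul])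



section Coords

variable {V' : Type*} [AddCommGroup V'] [Module ℚ V']

noncomputable def coordT {m : ℕ} (b : Module.Basis (Fin m) ℚ V') (j : Fin m) :
    V ⊗[ℚ] V' →ₗ[ℚ] V :=
  (TensorProduct.rid ℚ V).toLinearMap ∘ₗ LinearMap.lTensor V (b.coord j)

theorem coordT_tmul {m : ℕ} (b : Module.Basis (Fin m) ℚ V') (j : Fin m) (v : V) (v' : V') :
    coordT b j (v ⊗ₜ[ℚ] v') = b.repr v' j • v := by
  simp [coordT, TensorProduct.rid_tmul]

theorem sum_coordT {m : ℕ} (b : Module.Basis (Fin m) ℚ V') (x : V ⊗[ℚ] V') :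
    ∑ j, coordT b j x ⊗ₜ[ℚ] b j = x := by
  induction x using TensorProduct.induction_on with
  | zero => simp
  | tmul v v' =>
      simp only [coordT_tmul]
      rw [Finset.sum_congr rfl (fun j _ => TensorProduct.smul_tmul _ _ _),
        ← TensorProduct.tmul_sum]
      rw [Module.Basis.sum_repr]
  | add y z hy hz =>
      simp only [map_add, TensorProduct.add_tmul, Finset.sum_add_distrib, hy, hz]

end Coords


section MinSub

variable {V' : Type*} [AddCommGroup V'] [Module ℚ V'] [FiniteDimensional ℚ V']

theorem exists_min_subrep (ρ' : Representation ℚ G V') (U : Submodule ℚ V')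
    (hU : IsSubrep ρ' U) (hne : U ≠ ⊥) :
    ∃ τ : Submodule ℚ V', IsSubrep ρ' τ ∧ τ ≠ ⊥ ∧ τ ≤ U ∧
      ∀ Z : Submodule ℚ V', IsSubrep ρ' Z → Z ≤ τ → Z = ⊥ ∨ Z = τ := by
  suffices h : ∀ (n : ℕ) (U : Submodule ℚ V'), IsSubrep ρ' U → U ≠ ⊥ →
      Module.finrank ℚ U = n → ∃ τ : Submodule ℚ V', IsSubrep ρ' τ ∧ τ ≠ ⊥ ∧ τ ≤ U ∧
      ∀ Z : Submodule ℚ V', IsSubrep ρ' Z → Z ≤ τ → Z = ⊥ ∨ Z = τ by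
    exact h _ U hU hne rfl
  intro n
  induction n using Nat.strong_induction_on with
  | _ n ih =>
    intro U hU hne hn
    by_cases hmin : ∀ Z : Submodule ℚ V', IsSubrep ρ' Z → Z ≤ U → Z = ⊥ ∨ Z = U
    · exact ⟨U, hU, hne, le_refl U, hmin⟩
    · push_neg at hmin
      obtain ⟨Z, hZsub, hZle, hZne, hZneU⟩ := hmin
      have hlt : Module.finrank ℚ Z < Module.finrank ℚ U :=
        Submodule.finrank_lt_finrank_of_lt (lt_of_le_of_ne hZle hZneU)
      obtain ⟨τ, h1, h2, h3, h4⟩ := ih (Module.finrank ℚ Z) (hn ▸ hlt) Z hZsub hZne rfl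
      exact ⟨τ, h1, h2, le_trans h3 hZle, h4⟩

end MinSub


section Transport

variable {W U : Type*} [AddCommGroup W] [Module ℚ W] [AddCommGroup U] [Module ℚ U]

/-- Transport a representation along a linear equivalence. -/
noncomputable def transRep (σ : Representation ℚ G W) (e : W ≃ₗ[ℚ] U) :
    Representation ℚ G U where
  toFun g := e.conj (σ g)
  map_one' := by
    show e.conj (σ 1) = 1
    rw [map_one, Module.End.one_eq_id, LinearEquiv.conj_id, Module.End.one_eq_id]
  map_mul' g h := by
    show e.conj (σ (g * h)) = e.conj (σ g) * e.conj (σ h)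
    rw [map_mul, Module.End.mul_eq_comp, LinearEquiv.conj_comp, Module.End.mul_eq_comp]

theorem transRep_apply (σ : Representation ℚ G W) (e : W ≃ₗ[ℚ] U) (g : G) (u : U) :
    transRep σ e g u = e (σ g (e.symm u)) := by
  simp [transRep, LinearEquiv.conj_apply]

variable {V' : Type*} [AddCommGroup V'] [Module ℚ V'] [FiniteDimensional ℚ V']

theorem exists_qrep_iso (ρ' : Representation ℚ G V') (τ : Submodule ℚ V')
    (hτ : IsSubrep ρ' τ) :
    ∃ (R : QRep G) (e : R.carrier ≃ₗ[ℚ] ↥τ),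
      ∀ (g : G) (v : R.carrier), (e (R.rep g v) : V') = ρ' g (e v) := by
  set n := Module.finrank ℚ ↥τ
  set eb : ↥τ ≃ₗ[ℚ] (Fin n → ℚ) := (Module.finBasis ℚ ↥τ).equivFun with heb
  refine ⟨⟨Fin n → ℚ, transRep (subRep ρ' τ hτ) eb⟩, eb.symm, fun g v => ?_⟩
  show ((eb.symm (transRep (subRep ρ' τ hτ) eb g v) : ↥τ) : V') = _
  rw [transRep_apply, LinearEquiv.symm_apply_apply]
  show ((subRep ρ' τ hτ g (eb.symm v) : ↥τ) : V') = _
  simp [subRep, LinearMap.restrict_apply]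

theorem qrep_irred (R : QRep G) {τ : Submodule ℚ V'} {ρ' : Representation ℚ G V'}
    (e : R.carrier ≃ₗ[ℚ] ↥τ)
    (hcomm : ∀ (g : G) (v : R.carrier), (e (R.rep g v) : V') = ρ' g (e v))
    (hne : τ ≠ ⊥)
    (hmin : ∀ Z : Submodule ℚ V', IsSubrep ρ' Z → Z ≤ τ → Z = ⊥ ∨ Z = τ) :
    IsIrred R.rep := by
  constructor
  · obtain ⟨u, hu, hune⟩ := Submodule.exists_mem_ne_zero_of_ne_bot hne
    refine ⟨e.symm ⟨u, hu⟩, fun h => hune ?_⟩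
    have h2 : (⟨u, hu⟩ : ↥τ) = 0 := by
      have := congrArg e h
      rwa [e.apply_symm_apply, map_zero] at this
    exact congrArg Subtype.val h2
  · intro U' hU'
    set Z : Submodule ℚ V' := (U'.map (e : R.carrier →ₗ[ℚ] ↥τ)).map τ.subtype with hZ
    have hZsub : IsSubrep ρ' Z := by
      intro g v hv
      obtain ⟨z, hz, rfl⟩ := hv
      obtain ⟨u, hu, rfl⟩ := hz
      refine ⟨e (R.rep g u), ⟨R.rep g u, hU' g u hu, rfl⟩, ?_⟩
      simp only [Submodule.coe_subtype, LinearEquiv.coe_coe]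
      exact hcomm g u
    have hZle : Z ≤ τ := Submodule.map_subtype_le τ _
    rcases hmin Z hZsub hZle with h | h
    · refine Or.inl ((Submodule.eq_bot_iff _).mpr fun u hu => ?_)
      have hmem : ((e u : ↥τ) : V') ∈ Z := ⟨e u, ⟨u, hu, by simp⟩, rfl⟩
      rw [h, Submodule.mem_bot] at hmem
      have h3 : e u = 0 := Subtype.ext hmem
      have h4 := congrArg e.symm h3
      rwa [e.symm_apply_apply, map_zero] at h4
    · refine Or.inr (Submodule.eq_top_iff'.mpr fun u => ?_)
      have hmem : ((e u : ↥τ) : V') ∈ Z := by rw [h]; exact (e u).2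
      obtain ⟨z, hz, hze⟩ := hmem
      have hz' : z = e u := Subtype.ext hze
      rw [hz'] at hz
      obtain ⟨u', hu', hu'e⟩ := hz
      have h5 : u' = u := e.injective (by simpa using hu'e)
      exact h5 ▸ hu'

end Transport


section Key

variable {V' : Type*} [AddCommGroup V'] [Module ℚ V']

theorem key_avg [FiniteDimensional ℚ V] [FiniteDimensional ℚ V']
    (H : Subgroup G) [H.Normal]
    (ρ : Representation ℚ G V) (ρ' : Representation ℚ G V')
    (hk : ∀ R : QRep G, IsIrred R.rep → Occurs R.rep ρ → Occurs R.rep ρ' →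
      ∀ h ∈ H, R.rep h = 1)
    (x : V ⊗[ℚ] V') (hx : ∀ g : G, TensorProduct.map (ρ g) (ρ' g) x = x) :
    TensorProduct.map (avg ρ H) LinearMap.id x = x := by
  classical
  obtain ⟨B, hBsymm, hBpos, hBinv⟩ := exists_invariant_form ρ
  obtain ⟨B', hB'symm, hB'pos, hB'inv⟩ := exists_invariant_form ρ'
  set m := Module.finrank ℚ V' with hm
  set b : Module.Basis (Fin m) ℚ V' := Module.finBasis ℚ V' with hb
  set X : Fin m → V := fun j => coordT b j x with hX
  have hsum : ∑ j, X j ⊗ₜ[ℚ] b j = x := sum_coordT b x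
  have hXg : ∀ (g : G) (i : Fin m),
      X i = ∑ j, b.repr (ρ' g (b j)) i • ρ g (X j) := by
    intro g i
    show coordT b i x = _
    conv_lhs => rw [← hx g, ← hsum]
    rw [map_sum, map_sum]
    exact Finset.sum_congr rfl fun j _ => by
      rw [TensorProduct.map_tmul, coordT_tmul]
  set w : Fin m → V := fun j => X j - avg ρ H (X j) with hw
  have havgw : ∀ j, avg ρ H (w j) = 0 := by
    intro j
    show avg ρ H (X j - avg ρ H (X j)) = 0
    rw [map_sub, avg_avg, sub_self]
  have hwg : ∀ (g : G) (i : Fin m),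
      w i = ∑ j, b.repr (ρ' g (b j)) i • ρ g (w j) := by
    intro g i
    show X i - avg ρ H (X i) = _
    conv_lhs => rw [hXg g i]
    rw [map_sum, ← Finset.sum_sub_distrib]
    refine Finset.sum_congr rfl fun j _ => ?_
    rw [map_smul, ← smul_sub]
    congr 1
    show ρ g (X j) - avg ρ H (ρ g (X j)) = ρ g (X j - avg ρ H (X j))
    rw [map_sub, rep_avg_comm]
  set f : V →ₗ[ℚ] V' := ∑ j, (B.flip (w j)).smulRight (b j) with hf
  have hf_apply : ∀ v, f v = ∑ j, B v (w j) • b j := by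
    intro v
    rw [hf]
    simp [LinearMap.sum_apply, LinearMap.smulRight_apply, LinearMap.flip_apply]
  set gm : V' →ₗ[ℚ] V := ∑ j, (B'.flip (b j)).smulRight (w j) with hgm
  have hgm_apply : ∀ v', gm v' = ∑ j, B' v' (b j) • w j := by
    intro v'
    rw [hgm]
    simp [LinearMap.sum_apply, LinearMap.smulRight_apply, LinearMap.flip_apply]
  have hBw : ∀ (g : G) (v : V) (i : Fin m),
      B (ρ g v) (w i) = ∑ j, b.repr (ρ' g (b j)) i * B v (w j) := by
    intro g v i
    conv_lhs => rw [hwg g i]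
    rw [map_sum]
    refine Finset.sum_congr rfl fun j _ => ?_
    rw [map_smul, smul_eq_mul, hBinv g]
  have hf_equiv : ∀ (g : G) (v : V), f (ρ g v) = ρ' g (f v) := by
    intro g v
    calc f (ρ g v) = ∑ i, (∑ j, b.repr (ρ' g (b j)) i * B v (w j)) • b i := by
          rw [hf_apply]
          exact Finset.sum_congr rfl fun i _ => by rw [hBw g v i]
      _ = ∑ i, ∑ j, (b.repr (ρ' g (b j)) i * B v (w j)) • b i := by
          exact Finset.sum_congr rfl fun i _ => Finset.sum_smul
      _ = ∑ j, ∑ i, (b.repr (ρ' g (b j)) i * B v (w j)) • b i := Finset.sum_comm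
      _ = ∑ j, B v (w j) • ρ' g (b j) := by
          refine Finset.sum_congr rfl fun j _ => ?_
          rw [Finset.sum_congr rfl fun i (_ : i ∈ Finset.univ) =>
            (by rw [smul_smul, mul_comm] :
              ((b.repr ((ρ' g) (b j))) i * (B v) (w j)) • b i
                = (B v) (w j) • ((b.repr ((ρ' g) (b j))) i • b i)),
            ← Finset.smul_sum, Module.Basis.sum_repr]
      _ = ρ' g (f v) := by
          rw [hf_apply, map_sum]
          exact Finset.sum_congr rfl fun j _ => (map_smul _ _ _).symm
  have hgm_equiv : ∀ (g : G) (v' : V'), gm (ρ' g v') = ρ g (gm v') := by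
    intro g v'
    calc gm (ρ' g v')
        = ∑ j, B' (ρ' g v') (b j) • ∑ i, b.repr (ρ' g (b i)) j • ρ g (w i) := by
          rw [hgm_apply]
          exact Finset.sum_congr rfl fun j _ => by rw [← hwg g j]
      _ = ∑ j, ∑ i, (B' (ρ' g v') (b j) * b.repr (ρ' g (b i)) j) • ρ g (w i) := by
          refine Finset.sum_congr rfl fun j _ => ?_
          rw [Finset.smul_sum]
          exact Finset.sum_congr rfl fun i _ => by rw [smul_smul]
      _ = ∑ i, (∑ j, B' (ρ' g v') (b j) * b.repr (ρ' g (b i)) j) • ρ g (w i) := by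
          rw [Finset.sum_comm]
          exact Finset.sum_congr rfl fun i _ => Finset.sum_smul.symm
      _ = ∑ i, B' v' (b i) • ρ g (w i) := by
          refine Finset.sum_congr rfl fun i _ => ?_
          congr 1
          have h1 : ∀ j, B' (ρ' g v') (b j) * b.repr (ρ' g (b i)) j
              = B' (ρ' g v') (b.repr (ρ' g (b i)) j • b j) := fun j => by
            rw [map_smul, smul_eq_mul, mul_comm]
          rw [Finset.sum_congr rfl fun j _ => h1 j, ← map_sum, Module.Basis.sum_repr, hB'inv]
      _ = ρ g (gm v') := by
          rw [hgm_apply, map_sum]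
          exact Finset.sum_congr rfl fun i _ => (map_smul _ _ _).symm
  have hadj : ∀ (v : V) (v' : V'), B (gm v') v = B' v' (f v) := by
    intro v v'
    rw [hgm_apply, hf_apply, map_sum, LinearMap.sum_apply, map_sum]
    refine Finset.sum_congr rfl fun j _ => ?_
    rw [map_smul, map_smul, LinearMap.smul_apply, smul_eq_mul, smul_eq_mul, hBsymm]
    ring
  have hgminj : ∀ u ∈ LinearMap.range f, gm u = 0 → u = 0 := by
    intro u hu hgu
    obtain ⟨v, rfl⟩ := hu
    by_contra hne0
    have h1 : B (gm (f v)) v = 0 := by rw [hgu, map_zero, LinearMap.zero_apply]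
    rw [hadj] at h1
    exact (ne_of_gt (hB'pos _ hne0)) h1
  have hf0 : f = 0 := by
    by_contra hfne
    have hUne : LinearMap.range f ≠ ⊥ := by
      simpa [LinearMap.range_eq_bot] using hfne
    have hUsub : IsSubrep ρ' (LinearMap.range f) := by
      intro g v hv
      obtain ⟨u, rfl⟩ := hv
      exact ⟨ρ g u, hf_equiv g u⟩
    obtain ⟨τ, hτsub, hτne, hτle, hτmin⟩ := exists_min_subrep ρ' _ hUsub hUne
    obtain ⟨R, e, hcomm⟩ := exists_qrep_iso ρ' τ hτsub
    have hirr : IsIrred R.rep := qrep_irred R e hcomm hτne hτmin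
    obtain ⟨u0, hu0mem, hu0ne⟩ := Submodule.exists_mem_ne_zero_of_ne_bot hτne
    have hu0rng : u0 ∈ LinearMap.range f := hτle hu0mem
    have hocc' : Occurs R.rep ρ' := by
      refine ⟨τ.subtype ∘ₗ (e : R.carrier →ₗ[ℚ] ↥τ), fun h0 => hu0ne ?_, fun g v => ?_⟩
      · have h1 := congrArg (fun (φ : R.carrier →ₗ[ℚ] V') => φ (e.symm ⟨u0, hu0mem⟩)) h0
        simpa using h1
      · simpa using hcomm g v
    have hgmu0 : gm u0 ≠ 0 := fun h0 => hu0ne (hgminj u0 hu0rng h0)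
    have hocc : Occurs R.rep ρ := by
      refine ⟨gm ∘ₗ τ.subtype ∘ₗ (e : R.carrier →ₗ[ℚ] ↥τ), fun h0 => hgmu0 ?_, fun g v => ?_⟩
      · have h1 := congrArg (fun (φ : R.carrier →ₗ[ℚ] V) => φ (e.symm ⟨u0, hu0mem⟩)) h0
        simpa using h1
      · have h2 : gm ((e (R.rep g v) : ↥τ) : V') = gm (ρ' g ((e v : ↥τ) : V')) := by
          rw [hcomm g v]
        simpa [hgm_equiv] using h2
    have htriv := hk R hirr hocc hocc'
    have hfixu0 : ∀ h ∈ H, ρ' h u0 = u0 := by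
      intro h hh
      have h1 := hcomm h (e.symm ⟨u0, hu0mem⟩)
      rw [htriv h hh] at h1
      simpa using h1.symm
    have hzfix : gm u0 ∈ fixSub ρ H := by
      intro h hh
      rw [← hgm_equiv h u0, hfixu0 h hh]
    have hz0 : gm u0 = 0 := by
      have h1 : avg ρ H (gm u0) = gm u0 := avg_of_mem_fixSub ρ H hzfix
      have h2 : avg ρ H (gm u0) = 0 := by
        rw [hgm_apply, map_sum]
        refine Finset.sum_eq_zero fun j _ => ?_
        rw [map_smul, havgw, smul_zero]
      rw [← h1, h2]
    exact hgmu0 hz0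
  have hwzero : ∀ j, w j = 0 := by
    intro j
    have h1 : ∑ i, B (w j) (w i) • b i = 0 := by
      rw [← hf_apply, hf0, LinearMap.zero_apply]
    have h2 : B (w j) (w j) = 0 := by
      have h3 := congrArg (fun y => b.repr y j) h1
      simpa [map_sum, Finsupp.single_apply] using h3
    by_contra hne0
    exact (ne_of_gt (hBpos _ hne0)) h2
  have hXfix : ∀ j, avg ρ H (X j) = X j := by
    intro j
    have h1 : X j - avg ρ H (X j) = 0 := hwzero j
    rw [sub_eq_zero] at h1
    exact h1.symm
  conv_lhs => rw [← hsum]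
  rw [map_sum]
  rw [Finset.sum_congr rfl fun j (_ : j ∈ Finset.univ) => (by
    rw [TensorProduct.map_tmul, hXfix, LinearMap.id_apply] :
      TensorProduct.map (avg ρ H) LinearMap.id (X j ⊗ₜ[ℚ] b j) = X j ⊗ₜ[ℚ] b j)]
  exact hsum

end Key


end Statement18Aux

/-- if `H ⊴ G` and every irreducible rational representation occurring in
both `V` and `V\'` contains `H` in its kernel, then `(V ⊗ V\')^G = (V^H ⊗ V\'^H)^G`: the
natural inclusion of the `G`-invariants of `V^H ⊗ V\'^H` into those of `V ⊗ V\'` is an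
isomorphism (its image is all of `(V ⊗ V\')^G`). -/
theorem statement_18 {G : Type*} [Group G] [Fintype G]
    (H : Subgroup G) [H.Normal]
    {V V' : Type*} [AddCommGroup V] [Module ℚ V] [FiniteDimensional ℚ V]
    [AddCommGroup V'] [Module ℚ V'] [FiniteDimensional ℚ V']
    (ρ : Representation ℚ G V) (ρ' : Representation ℚ G V')
    (hker : ∀ R : QRep G, IsIrred R.rep → Occurs R.rep ρ → Occurs R.rep ρ' →
      ∀ h ∈ H, R.rep h = 1) :
    Submodule.map
        (TensorProduct.map (fixSub ρ H).subtype (fixSub ρ' H).subtype)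
        (((fixRep ρ H).tprod (fixRep ρ' H)).invariants) =
      (ρ.tprod ρ').invariants := by
  classical
  have hcommρ : ∀ (g : G), (ρ.tprod ρ') g ∘ₗ
        TensorProduct.map (fixSub ρ H).subtype (fixSub ρ' H).subtype
      = TensorProduct.map (fixSub ρ H).subtype (fixSub ρ' H).subtype ∘ₗ
        ((fixRep ρ H).tprod (fixRep ρ' H)) g := by
    intro g
    apply TensorProduct.ext'
    intro a c
    simp only [LinearMap.comp_apply, TensorProduct.map_tmul, Representation.tprod_apply,
      Submodule.coe_subtype]
    rfl
  apply le_antisymm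
  · rintro z ⟨y, hy, rfl⟩
    rw [Representation.mem_invariants]
    intro g
    rw [← LinearMap.comp_apply, hcommρ g, LinearMap.comp_apply]
    rw [SetLike.mem_coe, Representation.mem_invariants] at hy
    rw [hy g]
  · intro x hx
    rw [Representation.mem_invariants] at hx
    have hx' : ∀ g : G, TensorProduct.map (ρ g) (ρ' g) x = x := fun g => hx g
    have h1 : TensorProduct.map (avg ρ H) LinearMap.id x = x := key_avg H ρ ρ' hker x hx'
    set c := TensorProduct.comm ℚ V V' with hc
    have hnat : ∀ (φ : V →ₗ[ℚ] V) (ψ : V' →ₗ[ℚ] V'),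
        (TensorProduct.map ψ φ) ∘ₗ (c : V ⊗[ℚ] V' →ₗ[ℚ] V' ⊗[ℚ] V)
          = (c : V ⊗[ℚ] V' →ₗ[ℚ] V' ⊗[ℚ] V) ∘ₗ TensorProduct.map φ ψ := by
      intro φ ψ
      apply TensorProduct.ext'
      intro a d
      simp [hc]
    have hswap_inv : ∀ g : G, TensorProduct.map (ρ' g) (ρ g) (c x) = c x := by
      intro g
      have h2 := LinearMap.congr_fun (hnat (ρ g) (ρ' g)) x
      simp only [LinearMap.comp_apply, LinearEquiv.coe_coe] at h2
      rw [h2, hx' g]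
    have h2 : TensorProduct.map (avg ρ' H) LinearMap.id (c x) = c x :=
      key_avg H ρ' ρ (fun R hi o1 o2 => hker R hi o2 o1) (c x) hswap_inv
    have h3 : TensorProduct.map LinearMap.id (avg ρ' H) x = x := by
      have h5 := LinearMap.congr_fun (hnat LinearMap.id (avg ρ' H)) x
      simp only [LinearMap.comp_apply, LinearEquiv.coe_coe] at h5
      rw [h5] at h2
      exact c.injective h2
    have h6 : TensorProduct.map (avg ρ H) (avg ρ' H) x = x := by
      have h7 : TensorProduct.map (avg ρ H) (avg ρ' H)
          = TensorProduct.map (avg ρ H) LinearMap.id ∘ₗ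
            TensorProduct.map LinearMap.id (avg ρ' H) := by
        rw [← TensorProduct.map_comp, LinearMap.comp_id, LinearMap.id_comp]
      rw [h7, LinearMap.comp_apply, h3, h1]
    set eb : V →ₗ[ℚ] fixSub ρ H :=
      LinearMap.codRestrict (fixSub ρ H) (avg ρ H) (avg_mem_fixSub ρ H) with heb
    set eb' : V' →ₗ[ℚ] fixSub ρ' H :=
      LinearMap.codRestrict (fixSub ρ' H) (avg ρ' H) (avg_mem_fixSub ρ' H) with heb'
    have hfac : TensorProduct.map (fixSub ρ H).subtype (fixSub ρ' H).subtype ∘ₗ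
        TensorProduct.map eb eb' = TensorProduct.map (avg ρ H) (avg ρ' H) := by
      rw [← TensorProduct.map_comp, LinearMap.subtype_comp_codRestrict,
        LinearMap.subtype_comp_codRestrict]
    have hinj : Function.Injective
        (TensorProduct.map (fixSub ρ H).subtype (fixSub ρ' H).subtype) :=
      Module.Flat.tensorProduct_mapIncl_injective_of_right (fixSub ρ H) (fixSub ρ' H)
    refine ⟨TensorProduct.map eb eb' x, ?_, ?_⟩
    · rw [SetLike.mem_coe, Representation.mem_invariants]
      intro g
      apply hinj
      rw [← LinearMap.comp_apply (TensorProduct.map _ _), ← hcommρ g, LinearMap.comp_apply,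
        ← LinearMap.comp_apply (TensorProduct.map _ _) (TensorProduct.map eb eb'), hfac, h6,
        hx g]
    · rw [← LinearMap.comp_apply, hfac]
      exact h6

end Paper
end
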